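/- arXiv:2005.00098 — 4 statements merged into one kernel-verified Lean document; each statement's English description precedes it below -/
import Mathlib

section
/- Let {0} = L_0 ⊂ L_1 ⊂ ⋯ ⊂ L_m = L be a (q, γ)-filtration of a full-rank lattice L ⊆ ℝⁿ. Then for every 1 ≤ j ≤ m: μ(L_j) ≤ (q/√(1 − 1/γ²)) · λ₁(L_j/L_{j−1})/2. Consequently, if γ ≥ 2, then μ(L_j) ≤ q·λ₁(L_j/L_{j−1}). -/
open Metric Submodule
noncomputable section

/-- The length of a shortest nonzero vector of a set `A`. -/
def lambda1 {E : Type*} [NormedAddCommGroup E] (A : Set E) : ℝ :=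
  sInf (norm '' (A \ {0}))

/-- The covering radius of a lattice (given as a set): the supremum, over points `x` in the
real span of `A`, of the distance from `x` to `A`. -/
def covRad {E : Type*} [NormedAddCommGroup E] [NormedSpace ℝ E] (A : Set E) : ℝ :=
  sSup ((fun x => Metric.infDist x A) '' ((Submodule.span ℝ A : Submodule ℝ E) : Set E))

/-- The image of the set `A` under the orthogonal projection onto the orthogonal complement
of the real span of `S`. -/
def projPerp {n : ℕ} (S A : Set (EuclideanSpace ℝ (Fin n))) : Set (EuclideanSpace ℝ (Fin n)) :=
  (fun x => ((orthogonalProjection (Submodule.span ℝ S)ᗮ) x : EuclideanSpace ℝ (Fin n))) '' A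

/-- The quotient lattice `L_j / L_{j−1}`: the orthogonal projection of `L_j` onto the
orthogonal complement of the span of `L_{j−1}`. -/
def quotLat {n : ℕ} (Ls : ℕ → Submodule ℤ (EuclideanSpace ℝ (Fin n))) (j : ℕ) :
    Set (EuclideanSpace ℝ (Fin n)) :=
  projPerp (Ls (j - 1) : Set (EuclideanSpace ℝ (Fin n)))
    (Ls j : Set (EuclideanSpace ℝ (Fin n)))

/-- `Ls 0 ⊂ Ls 1 ⊂ ⋯ ⊂ Ls m` is a chain of primitive sublattices of `L` from `{0}` to `L`. -/
def IsPrimitiveChain {n : ℕ} (L : Submodule ℤ (EuclideanSpace ℝ (Fin n))) (m : ℕ)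
    (Ls : ℕ → Submodule ℤ (EuclideanSpace ℝ (Fin n))) : Prop :=
  Ls 0 = ⊥ ∧ Ls m = L ∧ (∀ j, j < m → Ls j < Ls (j + 1)) ∧
    ∀ j, j ≤ m → (Ls j : Set (EuclideanSpace ℝ (Fin n)))
      = (L : Set (EuclideanSpace ℝ (Fin n)))
        ∩ (Submodule.span ℝ (Ls j : Set (EuclideanSpace ℝ (Fin n))) :
            Submodule ℝ (EuclideanSpace ℝ (Fin n)))

/-- A `(q, γ)`-filtration of `L`: a chain of primitive sublattices such that
`μ(L_j/L_{j−1}) ≤ q·λ₁(L_j/L_{j−1})/2` and `λ₁(L_{j+1}/L_j) ≥ γ·λ₁(L_j/L_{j−1})`. -/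
def IsQGFiltration {n : ℕ} (L : Submodule ℤ (EuclideanSpace ℝ (Fin n))) (m : ℕ)
    (Ls : ℕ → Submodule ℤ (EuclideanSpace ℝ (Fin n))) (q γ : ℝ) : Prop :=
  IsPrimitiveChain L m Ls ∧
  (∀ j, 1 ≤ j → j ≤ m → covRad (quotLat Ls j) ≤ q * lambda1 (quotLat Ls j) / 2) ∧
  (∀ j, 1 ≤ j → j < m → lambda1 (quotLat Ls (j + 1)) ≥ γ * lambda1 (quotLat Ls j))

/-- The `j`-th "compressed projection" embedding `E_{j,α}(x) = Σ_{i=j}^m α^{i−j}·π_i(x)`,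
where `π_i` is the orthogonal projection onto `span(L_i) ∩ span(L_{i−1})ᗮ`. -/
def filtEmbed {n : ℕ} (Ls : ℕ → Submodule ℤ (EuclideanSpace ℝ (Fin n))) (m : ℕ) (α : ℝ)
    (j : ℕ) (x : EuclideanSpace ℝ (Fin n)) : EuclideanSpace ℝ (Fin n) :=
  ∑ i ∈ Finset.Icc j m, α ^ (i - j) •
    ((orthogonalProjection
        ((Submodule.span ℝ (Ls i : Set (EuclideanSpace ℝ (Fin n)))) ⊓
          (Submodule.span ℝ (Ls (i - 1) : Set (EuclideanSpace ℝ (Fin n))))ᗮ) x :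
      EuclideanSpace ℝ (Fin n)))

lemma exists_covRad_bound (n : ℕ) (G : Submodule ℤ (EuclideanSpace ℝ (Fin n))) :
    ∃ C : ℝ, ∀ x ∈ Submodule.span ℝ (G : Set (EuclideanSpace ℝ (Fin n))),
      Metric.infDist x (G : Set (EuclideanSpace ℝ (Fin n))) ≤ C := by
  obtain ⟨s, hsG, hspan, hli⟩ :=
    exists_linearIndependent ℝ (G : Set (EuclideanSpace ℝ (Fin n)))
  have hfin : s.Finite := hli.setFinite
  refine ⟨∑ b ∈ hfin.toFinset, ‖b‖, fun x hx => ?_⟩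
  rw [← hspan, ← hfin.coe_toFinset, mem_span_finset] at hx
  obtain ⟨f, -, hf⟩ := hx
  have hy : (∑ b ∈ hfin.toFinset, (⌊f b⌋ : ℤ) • b) ∈ G :=
    Submodule.sum_mem _ fun b hb => Submodule.smul_mem _ _ (hsG (hfin.mem_toFinset.mp hb))
  refine le_trans (Metric.infDist_le_dist_of_mem hy) ?_
  rw [dist_eq_norm, ← hf]
  have hsub : (∑ b ∈ hfin.toFinset, f b • b) - (∑ b ∈ hfin.toFinset, (⌊f b⌋ : ℤ) • b)
      = ∑ b ∈ hfin.toFinset, (f b - (⌊f b⌋ : ℝ)) • b := by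
    rw [← Finset.sum_sub_distrib]
    refine Finset.sum_congr rfl fun b _ => ?_
    rw [sub_smul, Int.cast_smul_eq_zsmul]
  rw [hsub]
  refine le_trans (norm_sum_le _ _) (Finset.sum_le_sum fun b _ => ?_)
  rw [norm_smul, Real.norm_eq_abs]
  have h1 : |f b - (⌊f b⌋ : ℝ)| ≤ 1 := by
    rw [abs_le]
    constructor
    · nlinarith [Int.floor_le (f b)]
    · nlinarith [Int.lt_floor_add_one (f b)]
  nlinarith [norm_nonneg b, abs_nonneg (f b - (⌊f b⌋ : ℝ))]

lemma step_lemma (n : ℕ) (Lprev Lcur : Submodule ℤ (EuclideanSpace ℝ (Fin n)))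
    (hsub : Lprev ≤ Lcur) (B c : ℝ) (hB : 0 ≤ B) (hc : 0 ≤ c)
    (hprev : ∀ u ∈ Submodule.span ℝ (Lprev : Set (EuclideanSpace ℝ (Fin n))),
      Metric.infDist u (Lprev : Set (EuclideanSpace ℝ (Fin n))) ≤ B)
    (hquot : ∀ w ∈ Submodule.span ℝ
        (projPerp (Lprev : Set (EuclideanSpace ℝ (Fin n))) (Lcur : Set (EuclideanSpace ℝ (Fin n)))),
      Metric.infDist w
        (projPerp (Lprev : Set (EuclideanSpace ℝ (Fin n))) (Lcur : Set (EuclideanSpace ℝ (Fin n)))) ≤ c)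
    (x : EuclideanSpace ℝ (Fin n)) (hx : x ∈ Submodule.span ℝ (Lcur : Set (EuclideanSpace ℝ (Fin n)))) :
    Metric.infDist x (Lcur : Set (EuclideanSpace ℝ (Fin n))) ≤ Real.sqrt (B ^ 2 + c ^ 2) := by
  set K : Submodule ℝ (EuclideanSpace ℝ (Fin n)) :=
    Submodule.span ℝ (Lprev : Set (EuclideanSpace ℝ (Fin n))) with hK
  set f : EuclideanSpace ℝ (Fin n) →ₗ[ℝ] EuclideanSpace ℝ (Fin n) :=
    Kᗮ.subtype ∘ₗ (orthogonalProjection Kᗮ).toLinearMap with hfdef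
  have hproj : projPerp (Lprev : Set (EuclideanSpace ℝ (Fin n)))
      (Lcur : Set (EuclideanSpace ℝ (Fin n))) = f '' (Lcur : Set (EuclideanSpace ℝ (Fin n))) := rfl
  set S := Real.sqrt (B ^ 2 + c ^ 2) with hS
  have hS0 : 0 ≤ S := Real.sqrt_nonneg _
  have hS2 : S ^ 2 = B ^ 2 + c ^ 2 := Real.sq_sqrt (by positivity)
  have hSB : B ≤ S := by nlinarith
  have hSc : c ≤ S := by nlinarith
  refine le_of_forall_pos_le_add fun ε hε => ?_
  set δ := ε / 2 with hδ
  have hδ0 : 0 < δ := by positivity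
  have hfx : f x ∈ Submodule.span ℝ (projPerp (Lprev : Set (EuclideanSpace ℝ (Fin n)))
      (Lcur : Set (EuclideanSpace ℝ (Fin n)))) := by
    rw [hproj, Submodule.span_image]
    exact Submodule.mem_map_of_mem hx
  have h1 : Metric.infDist (f x) (projPerp (Lprev : Set (EuclideanSpace ℝ (Fin n)))
      (Lcur : Set (EuclideanSpace ℝ (Fin n)))) < c + δ :=
    lt_of_le_of_lt (hquot _ hfx) (by linarith)
  have hne : (projPerp (Lprev : Set (EuclideanSpace ℝ (Fin n)))
      (Lcur : Set (EuclideanSpace ℝ (Fin n)))).Nonempty := ⟨f 0, 0, Lcur.zero_mem, rfl⟩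
  obtain ⟨y', hy'mem, hy'⟩ := (Metric.infDist_lt_iff hne).mp h1
  rw [hproj] at hy'mem
  obtain ⟨y, hy, rfl⟩ := hy'mem
  set w := x - y with hw
  have hufw : ((orthogonalProjection K w : K) : EuclideanSpace ℝ (Fin n)) + f w = w :=
    K.starProjection_add_starProjection_orthogonal w
  set u := ((orthogonalProjection K w : K) : EuclideanSpace ℝ (Fin n)) with hu
  have huK : u ∈ K := SetLike.coe_mem _
  have h2 : Metric.infDist u (Lprev : Set (EuclideanSpace ℝ (Fin n))) < B + δ :=
    lt_of_le_of_lt (hprev u huK) (by linarith)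
  obtain ⟨z, hz, hzd⟩ := (Metric.infDist_lt_iff ⟨0, Lprev.zero_mem⟩).mp h2
  have hyz : y + z ∈ Lcur := Lcur.add_mem hy (hsub hz)
  have hxsplit : x - (y + z) = (u - z) + f w := by
    have h : u + f w = x - y := hufw
    have h2 : (u - z) + f w = (u + f w) - z := by abel
    rw [h2, h]
    abel
  have hfwK : f w ∈ Kᗮ := SetLike.coe_mem _
  have huzK : u - z ∈ K := K.sub_mem huK (Submodule.subset_span hz)
  have hinner : (inner ℝ (u - z) (f w) : ℝ) = 0 :=
    Submodule.inner_right_of_mem_orthogonal huzK hfwK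
  have hnorm : ‖x - (y + z)‖ ^ 2 = ‖u - z‖ ^ 2 + ‖f w‖ ^ 2 := by
    rw [hxsplit, norm_add_sq_real, hinner]
    ring
  have hd1 : ‖u - z‖ < B + δ := by rwa [dist_eq_norm] at hzd
  have hd2 : ‖f w‖ < c + δ := by
    have hmap : f w = f x - f y := map_sub f x y
    rw [hmap, ← dist_eq_norm]
    exact hy'
  have hfin : Metric.infDist x (Lcur : Set (EuclideanSpace ℝ (Fin n))) ≤ ‖x - (y + z)‖ := by
    rw [← dist_eq_norm]
    exact Metric.infDist_le_dist_of_mem hyz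
  have hbound : ‖x - (y + z)‖ ≤ S + ε := by
    have hNsq : ‖x - (y + z)‖ ^ 2 ≤ (S + 2 * δ) ^ 2 := by
      rw [hnorm]
      nlinarith [norm_nonneg (u - z), norm_nonneg (f w), hS2, hSB, hSc]
    calc ‖x - (y + z)‖ = Real.sqrt (‖x - (y + z)‖ ^ 2) := (Real.sqrt_sq (norm_nonneg _)).symm
      _ ≤ Real.sqrt ((S + 2 * δ) ^ 2) := Real.sqrt_le_sqrt hNsq
      _ = S + 2 * δ := Real.sqrt_sq (by positivity)
      _ = S + ε := by rw [hδ]; ring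
  exact hfin.trans hbound

lemma bddAbove_projPerp (n : ℕ) (P Q : Submodule ℤ (EuclideanSpace ℝ (Fin n))) :
    BddAbove ((fun x => Metric.infDist x (projPerp (P : Set (EuclideanSpace ℝ (Fin n)))
        (Q : Set (EuclideanSpace ℝ (Fin n))))) ''
      ((Submodule.span ℝ (projPerp (P : Set (EuclideanSpace ℝ (Fin n)))
        (Q : Set (EuclideanSpace ℝ (Fin n)))) :
          Submodule ℝ (EuclideanSpace ℝ (Fin n))) : Set (EuclideanSpace ℝ (Fin n)))) := by
  set f : EuclideanSpace ℝ (Fin n) →ₗ[ℝ] EuclideanSpace ℝ (Fin n) :=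
    (Submodule.span ℝ (P : Set (EuclideanSpace ℝ (Fin n))))ᗮ.subtype ∘ₗ
      (orthogonalProjection (Submodule.span ℝ (P : Set (EuclideanSpace ℝ (Fin n))))ᗮ).toLinearMap
      with hfdef
  have hset : projPerp (P : Set (EuclideanSpace ℝ (Fin n))) (Q : Set (EuclideanSpace ℝ (Fin n)))
      = ((Submodule.map (f.restrictScalars ℤ) Q : Submodule ℤ (EuclideanSpace ℝ (Fin n))) :
          Set (EuclideanSpace ℝ (Fin n))) := rfl
  obtain ⟨C, hC⟩ := exists_covRad_bound n (Submodule.map (f.restrictScalars ℤ) Q)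
  rw [hset]
  refine ⟨C, ?_⟩
  rintro r ⟨x, hx, rfl⟩
  exact hC x hx

/-- For a `(q, γ)`-filtration of `L` and `1 ≤ j ≤ m`:
`μ(L_j) ≤ (q/√(1 − 1/γ²))·λ₁(L_j/L_{j−1})/2`; consequently, if `γ ≥ 2` then
`μ(L_j) ≤ q·λ₁(L_j/L_{j−1})`. -/
theorem covRad_prefix_le_of_filtration
    (n : ℕ) (L : Submodule ℤ (EuclideanSpace ℝ (Fin n))) [DiscreteTopology L] (hL : IsZLattice ℝ L)
    (m : ℕ) (Ls : ℕ → Submodule ℤ (EuclideanSpace ℝ (Fin n))) (q γ : ℝ) (hq : 1 ≤ q) (hγ : 1 < γ)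
    (hfil : IsQGFiltration L m Ls q γ) (j : ℕ) (hj1 : 1 ≤ j) (hjm : j ≤ m) :
    covRad (Ls j : Set (EuclideanSpace ℝ (Fin n)))
        ≤ q / Real.sqrt (1 - 1 / γ ^ 2) * lambda1 (quotLat Ls j) / 2 ∧
      (2 ≤ γ → covRad (Ls j : Set (EuclideanSpace ℝ (Fin n))) ≤ q * lambda1 (quotLat Ls j)) := by
  obtain ⟨⟨h0, hm, hlt, hprim⟩, hcov, hgap⟩ := hfil
  have hq0 : (0:ℝ) < q := by linarith
  have hγ0 : (0:ℝ) < γ := by linarith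
  set Λ : ℕ → ℝ := fun i => lambda1 (quotLat Ls i) with hΛ
  have hΛ0 : ∀ i, 0 ≤ Λ i := by
    intro i
    apply Real.sInf_nonneg
    rintro r ⟨v, hv, rfl⟩
    exact norm_nonneg v
  -- monotonicity of the chain
  have hmono : ∀ b, b ≤ m → ∀ a, a ≤ b → Ls a ≤ Ls b := by
    intro b
    induction b with
    | zero => intro _ a ha; interval_cases a; exact le_rfl
    | succ b ih =>
      intro hbm a ha
      rcases Nat.eq_or_lt_of_le ha with rfl | h
      · exact le_rfl
      · exact (ih (by omega) a (by omega)).trans (hlt b (by omega)).le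
  -- key induction
  have key : ∀ k, k ≤ m → ∀ x ∈ Submodule.span ℝ (Ls k : Set (EuclideanSpace ℝ (Fin n))),
      Metric.infDist x (Ls k : Set (EuclideanSpace ℝ (Fin n)))
        ≤ Real.sqrt (∑ i ∈ Finset.Icc 1 k, (q * Λ i / 2) ^ 2) := by
    intro k
    induction k with
    | zero =>
      intro _ x hx
      rw [h0, Submodule.bot_coe, Submodule.span_zero_singleton, Submodule.mem_bot] at hx
      subst hx
      rw [h0, Submodule.bot_coe]
      have : Metric.infDist (0 : EuclideanSpace ℝ (Fin n)) {0} = 0 := by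
        simp [Metric.infDist_zero_of_mem]
      rw [this]
      exact Real.sqrt_nonneg _
    | succ k ih =>
      intro hk x hx
      have hceq : quotLat Ls (k + 1)
          = projPerp (Ls k : Set (EuclideanSpace ℝ (Fin n)))
              (Ls (k + 1) : Set (EuclideanSpace ℝ (Fin n))) := by
        simp [quotLat]
      have hquot : ∀ w ∈ Submodule.span ℝ (projPerp (Ls k : Set (EuclideanSpace ℝ (Fin n)))
          (Ls (k + 1) : Set (EuclideanSpace ℝ (Fin n)))),
          Metric.infDist w (projPerp (Ls k : Set (EuclideanSpace ℝ (Fin n)))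
            (Ls (k + 1) : Set (EuclideanSpace ℝ (Fin n)))) ≤ q * Λ (k + 1) / 2 := by
        intro w hw
        have h1 : Metric.infDist w (projPerp (Ls k : Set (EuclideanSpace ℝ (Fin n)))
            (Ls (k + 1) : Set (EuclideanSpace ℝ (Fin n))))
            ≤ covRad (projPerp (Ls k : Set (EuclideanSpace ℝ (Fin n)))
              (Ls (k + 1) : Set (EuclideanSpace ℝ (Fin n)))) :=
          le_csSup (bddAbove_projPerp n (Ls k) (Ls (k + 1))) ⟨w, hw, rfl⟩
        refine h1.trans ?_
        rw [← hceq]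
        exact hcov (k + 1) (by omega) hk
      have hstep := step_lemma n (Ls k) (Ls (k + 1)) (hmono (k + 1) hk k (by omega))
        (Real.sqrt (∑ i ∈ Finset.Icc 1 k, (q * Λ i / 2) ^ 2)) (q * Λ (k + 1) / 2)
        (Real.sqrt_nonneg _) (by have := hΛ0 (k+1); positivity)
        (ih (by omega)) hquot x hx
      refine hstep.trans (le_of_eq ?_)
      congr 1
      rw [Real.sq_sqrt (by positivity)]
      rw [Finset.sum_Icc_succ_top (by omega : 1 ≤ k + 1)]
  -- covering radius bound
  have hcovj : covRad (Ls j : Set (EuclideanSpace ℝ (Fin n)))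
      ≤ Real.sqrt (∑ i ∈ Finset.Icc 1 j, (q * Λ i / 2) ^ 2) := by
    apply Real.sSup_le
    · rintro r ⟨x, hx, rfl⟩
      exact key j hjm x hx
    · exact Real.sqrt_nonneg _
  -- geometric estimates
  have hgeo : ∀ i k, 1 ≤ i → i + k ≤ m → γ ^ k * Λ i ≤ Λ (i + k) := by
    intro i k hi
    induction k with
    | zero => intro _; simp
    | succ k ih =>
      intro h
      have h1 : γ ^ k * Λ i ≤ Λ (i + k) := ih (by omega)
      have h2 := hgap (i + k) (by omega) (by omega)
      have h3 : γ * Λ (i + k) ≤ Λ (i + k + 1) := h2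
      calc γ ^ (k + 1) * Λ i = γ * (γ ^ k * Λ i) := by ring
        _ ≤ γ * Λ (i + k) := by nlinarith [hΛ0 i]
        _ ≤ Λ (i + (k + 1)) := by rw [show i + (k + 1) = i + k + 1 by omega]; exact h3
  have hterm : ∀ i ∈ Finset.Icc 1 j,
      (q * Λ i / 2) ^ 2 ≤ (q * Λ j / 2) ^ 2 * (1 / γ ^ 2) ^ (j - i) := by
    intro i hi
    rw [Finset.mem_Icc] at hi
    have hg : (0:ℝ) < γ ^ (j - i) := by positivity
    have hΛle : γ ^ (j - i) * Λ i ≤ Λ j := by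
      have := hgeo i (j - i) hi.1 (by omega)
      rwa [show i + (j - i) = j by omega] at this
    have hA : q * Λ i / 2 ≤ (q * Λ j / 2) / γ ^ (j - i) := by
      rw [le_div_iff₀ hg]
      nlinarith [hΛ0 i]
    have hsq : (q * Λ i / 2) ^ 2 ≤ ((q * Λ j / 2) / γ ^ (j - i)) ^ 2 :=
      pow_le_pow_left₀ (by have := hΛ0 i; positivity) hA 2
    refine hsq.trans (le_of_eq ?_)
    have hpow : ((1:ℝ) / γ ^ 2) ^ (j - i) = 1 / (γ ^ (j - i)) ^ 2 := by
      rw [div_pow, one_pow, ← pow_mul, ← pow_mul, Nat.mul_comm]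
    rw [hpow]
    ring
  have hr1 : (1 / γ ^ 2 : ℝ) < 1 := by
    rw [div_lt_one (by positivity)]
    nlinarith
  have hr0 : (0:ℝ) ≤ 1 / γ ^ 2 := by positivity
  have h1r : (0:ℝ) < 1 - 1 / γ ^ 2 := by linarith
  have hsum1 : ∑ i ∈ Finset.Icc 1 j, ((1 / γ ^ 2 : ℝ)) ^ (j - i)
      = ∑ k ∈ Finset.range j, ((1 / γ ^ 2 : ℝ)) ^ k := by
    apply Finset.sum_bij' (fun i _ => j - i) (fun k _ => j - k)
    · intro a ha; rw [Finset.mem_Icc] at ha; rw [Finset.mem_range]; omega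
    · intro a ha; rw [Finset.mem_range] at ha; rw [Finset.mem_Icc]; omega
    · intro a ha; rw [Finset.mem_Icc] at ha; omega
    · intro a ha; rw [Finset.mem_range] at ha; omega
    · intro a ha; rfl
  have hsumle : ∑ i ∈ Finset.Icc 1 j, (q * Λ i / 2) ^ 2
      ≤ (q * Λ j / 2) ^ 2 * (1 / (1 - 1 / γ ^ 2)) := by
    calc ∑ i ∈ Finset.Icc 1 j, (q * Λ i / 2) ^ 2
        ≤ ∑ i ∈ Finset.Icc 1 j, (q * Λ j / 2) ^ 2 * (1 / γ ^ 2) ^ (j - i) :=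
          Finset.sum_le_sum hterm
      _ = (q * Λ j / 2) ^ 2 * ∑ i ∈ Finset.Icc 1 j, (1 / γ ^ 2) ^ (j - i) := by
          rw [Finset.mul_sum]
      _ ≤ (q * Λ j / 2) ^ 2 * (1 / (1 - 1 / γ ^ 2)) := by
          rw [hsum1]
          refine mul_le_mul_of_nonneg_left ?_ (by positivity)
          have hgs := geom_sum_mul (1 / γ ^ 2 : ℝ) j
          rw [le_div_iff₀ h1r]
          nlinarith [pow_nonneg hr0 j]
  have hfirst : covRad (Ls j : Set (EuclideanSpace ℝ (Fin n)))
      ≤ q / Real.sqrt (1 - 1 / γ ^ 2) * Λ j / 2 := by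
    refine hcovj.trans ?_
    refine (Real.sqrt_le_sqrt hsumle).trans (le_of_eq ?_)
    rw [Real.sqrt_mul (by positivity), Real.sqrt_sq (by have := hΛ0 j; positivity),
        one_div (1 - 1 / γ ^ 2), Real.sqrt_inv]
    ring
  refine ⟨hfirst, fun h2γ => ?_⟩
  have h14 : (1 / 4 : ℝ) ≤ 1 - 1 / γ ^ 2 := by
    have h4 : (4:ℝ) ≤ γ ^ 2 := by nlinarith
    have : (1:ℝ) / γ ^ 2 ≤ 1 / 4 := one_div_le_one_div_of_le (by norm_num) h4
    linarith
  have hs : (1:ℝ) / 2 ≤ Real.sqrt (1 - 1 / γ ^ 2) := by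
    have h12 : Real.sqrt (1 / 4) = 1 / 2 := by
      rw [show (1 / 4 : ℝ) = (1 / 2) ^ 2 by norm_num, Real.sqrt_sq (by norm_num)]
    rw [← h12]
    exact Real.sqrt_le_sqrt h14
  have hs0 : 0 < Real.sqrt (1 - 1 / γ ^ 2) := by linarith
  refine hfirst.trans ?_
  rw [div_mul_eq_mul_div, div_div, div_le_iff₀ (by positivity)]
  nlinarith [hΛ0 j, mul_nonneg (mul_nonneg hq0.le (hΛ0 j))
    (by linarith : (0:ℝ) ≤ 2 * Real.sqrt (1 - 1 / γ ^ 2) - 1)]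
end
end

section
/- Let L ⊆ ℝⁿ be a full-rank lattice with a filtration {0} = L_0 ⊂ L_1 ⊂ ⋯ ⊂ L_m = L of primitive sublattices, let 0 < α < 1, and for 1 ≤ j ≤ m let E_{j,α}(x) = Σ_{i=j}^m α^{i−j}·π_i(x), where π_i is the orthogonal projection onto span(L_i) ∩ span(L_{i−1})^⊥. Then for all x, y ∈ ℝⁿ: Σ_{j=1}^m dist(E_{j,α}(x − y), E_{j,α}(L))² ≤ (1/(1 − α²)) · dist(x − y, L)². -/
open Metric Submodule
noncomputable section

section Helpers

variable {E : Type*} [NormedAddCommGroup E] [InnerProductSpace ℝ E]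

/-- Norm squared of a sum of pairwise-orthogonal vectors. -/
lemma norm_sq_sum_of_orth {ι : Type*} (s : Finset ι) (f : ι → E)
    (h : ∀ i ∈ s, ∀ k ∈ s, i ≠ k → inner ℝ (f i) (f k) = 0) :
    ‖∑ i ∈ s, f i‖ ^ 2 = ∑ i ∈ s, ‖f i‖ ^ 2 := by
  rw [← real_inner_self_eq_norm_sq, sum_inner]
  refine Finset.sum_congr rfl fun i hi => ?_
  rw [inner_sum, Finset.sum_eq_single i
    (fun k hk hne => h i hi k hk (Ne.symm hne)) (fun hi' => absurd hi hi'),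
    real_inner_self_eq_norm_sq]

/-- Bessel-type inequality for projections onto pairwise orthogonal subspaces. -/
lemma sum_norm_sq_proj_le {ι : Type*} (s : Finset ι) (V : ι → Submodule ℝ E)
    [∀ i, CompleteSpace (V i)]
    (horth : ∀ i ∈ s, ∀ k ∈ s, i ≠ k → ∀ u ∈ V i, ∀ v ∈ V k, inner ℝ u v = 0)
    (w : E) :
    ∑ i ∈ s, ‖(orthogonalProjection (V i) w : E)‖ ^ 2 ≤ ‖w‖ ^ 2 := by
  set g : ι → E := fun i => (orthogonalProjection (V i) w : E) with hg
  have hcross : ∀ i ∈ s, ∀ k ∈ s, i ≠ k → inner ℝ (g i) (g k) = 0 := fun i hi k hk hne =>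
    horth i hi k hk hne _ (SetLike.coe_mem _) _ (SetLike.coe_mem _)
  set t := ∑ i ∈ s, g i with htdef
  have hts : ‖t‖ ^ 2 = ∑ i ∈ s, ‖g i‖ ^ 2 := norm_sq_sum_of_orth s g hcross
  have hwt : inner ℝ w t = ∑ i ∈ s, ‖g i‖ ^ 2 := by
    rw [htdef, inner_sum]
    refine Finset.sum_congr rfl fun i hi => ?_
    have h1 : w - g i ∈ (V i)ᗮ := Submodule.sub_starProjection_mem_orthogonal (K := V i) w
    have h2 : inner ℝ (g i) (w - g i) = 0 :=
      h1 _ (SetLike.coe_mem (orthogonalProjection (V i) w))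
    rw [inner_sub_right] at h2
    have : inner ℝ w (g i) = inner ℝ (g i : E) (g i) := by
      rw [real_inner_comm]; linarith
    rw [this, real_inner_self_eq_norm_sq]
  have hle : inner ℝ w t ≤ ‖w‖ * ‖t‖ := real_inner_le_norm w t
  have h1 : ∑ i ∈ s, ‖g i‖ ^ 2 ≤ ‖w‖ ^ 2 := by
    nlinarith [norm_nonneg t, norm_nonneg w, sq_nonneg (‖w‖ - ‖t‖)]
  exact h1

end Helpers

/-- Expansion of the compressed-projection embedding: for any filtration of `L` and
`0 < α < 1`, `Σ_{j=1}^m dist(E_{j,α}(x − y), E_{j,α}(L))² ≤ (1/(1 − α²))·dist(x − y, L)²`. -/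
theorem filtEmbed_expansion
    (n : ℕ) (L : Submodule ℤ (EuclideanSpace ℝ (Fin n))) [DiscreteTopology L] (hL : IsZLattice ℝ L)
    (m : ℕ) (Ls : ℕ → Submodule ℤ (EuclideanSpace ℝ (Fin n))) (hchain : IsPrimitiveChain L m Ls)
    (α : ℝ) (hα0 : 0 < α) (hα1 : α < 1) (x y : EuclideanSpace ℝ (Fin n)) :
    ∑ j ∈ Finset.Icc 1 m,
        Metric.infDist (filtEmbed Ls m α j (x - y))
          (filtEmbed Ls m α j '' (L : Set (EuclideanSpace ℝ (Fin n)))) ^ 2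
      ≤ 1 / (1 - α ^ 2) * Metric.infDist (x - y) (L : Set (EuclideanSpace ℝ (Fin n))) ^ 2 := by
  classical
  obtain ⟨h0, hm, hlt, _hprim⟩ := hchain
  set z := x - y with hz
  set V : ℕ → Submodule ℝ (EuclideanSpace ℝ (Fin n)) := fun i =>
    (Submodule.span ℝ (Ls i : Set (EuclideanSpace ℝ (Fin n)))) ⊓
      (Submodule.span ℝ (Ls (i - 1) : Set (EuclideanSpace ℝ (Fin n))))ᗮ with hV
  have hα2 : (0:ℝ) < 1 - α ^ 2 := by nlinarith
  -- monotonicity of the chain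
  have hmono : ∀ i k : ℕ, i ≤ k → k ≤ m → Ls i ≤ Ls k := by
    intro i k hik hkm
    induction k with
    | zero => simp [Nat.le_zero.mp hik]
    | succ k ih =>
      rcases Nat.lt_or_ge i (k + 1) with h | h
      · exact le_trans (ih (Nat.lt_succ_iff.mp h) (le_trans (Nat.le_succ k) hkm))
          (hlt k (Nat.lt_of_succ_le hkm)).le
      · have : i = k + 1 := le_antisymm hik h
        subst this; exact le_rfl
  -- pairwise orthogonality of the V i for 1 ≤ i ≤ m
  have key : ∀ i k : ℕ, 1 ≤ i → i < k → k ≤ m →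
      ∀ u ∈ V i, ∀ v ∈ V k, inner ℝ u v = 0 := by
    intro i k h1 hik hkm u hu v hv
    have hsub : (Ls i : Set (EuclideanSpace ℝ (Fin n))) ⊆
        (Ls (k - 1) : Set (EuclideanSpace ℝ (Fin n))) :=
      hmono i (k - 1) (by omega) (by omega)
    have hu' : u ∈ Submodule.span ℝ (Ls (k - 1) : Set (EuclideanSpace ℝ (Fin n))) :=
      Submodule.span_mono hsub hu.1
    exact hv.2 u hu'
  have hVorth : ∀ i ∈ Finset.Icc 1 m, ∀ k ∈ Finset.Icc 1 m, i ≠ k →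
      ∀ u ∈ V i, ∀ v ∈ V k, inner ℝ u v = 0 := by
    intro i hi k hk hne u hu v hv
    simp only [Finset.mem_Icc] at hi hk
    rcases lt_or_gt_of_ne hne with h | h
    · exact key i k hi.1 h hk.2 u hu v hv
    · rw [real_inner_comm]; exact key k i hk.1 h hi.2 v hv u hu
  -- notation for projections
  set P : ℕ → EuclideanSpace ℝ (Fin n) → EuclideanSpace ℝ (Fin n) :=
    fun i w => (orthogonalProjection (V i) w : EuclideanSpace ℝ (Fin n)) with hP
  have hfe : ∀ j w, filtEmbed Ls m α j w = ∑ i ∈ Finset.Icc j m, α ^ (i - j) • P i w := by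
    intro j w; rfl
  -- norm identity for each embedding
  have hnorm : ∀ j, 1 ≤ j → ∀ w : EuclideanSpace ℝ (Fin n),
      ‖filtEmbed Ls m α j w‖ ^ 2
        = ∑ i ∈ Finset.Icc j m, (α ^ 2) ^ (i - j) * ‖P i w‖ ^ 2 := by
    intro j hj w
    rw [hfe]
    rw [norm_sq_sum_of_orth]
    · refine Finset.sum_congr rfl fun i hi => ?_
      rw [norm_smul, Real.norm_eq_abs, abs_of_pos (pow_pos hα0 _), mul_pow, ← pow_mul,
        ← pow_mul, Nat.mul_comm 2 (i - j), Nat.mul_comm (i - j) 2]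
    · intro i hi k hk hne
      simp only [Finset.mem_Icc] at hi hk
      rw [real_inner_smul_left, real_inner_smul_right]
      have : inner ℝ (P i w) (P k w) = 0 :=
        hVorth i (Finset.mem_Icc.mpr ⟨le_trans hj hi.1, hi.2⟩)
          k (Finset.mem_Icc.mpr ⟨le_trans hj hk.1, hk.2⟩) hne
          _ (SetLike.coe_mem _) _ (SetLike.coe_mem _)
      rw [this]; ring
  -- geometric bound
  have hβ0 : (0:ℝ) ≤ α ^ 2 := sq_nonneg α
  have hβ1 : α ^ 2 < 1 := by nlinarith
  have hgeo : ∀ i : ℕ, ∑ j ∈ Finset.Icc 1 i, (α ^ 2) ^ (i - j) ≤ 1 / (1 - α ^ 2) := by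
    intro i
    have heq : ∑ j ∈ Finset.Icc 1 i, (α ^ 2) ^ (i - j)
        = ∑ t ∈ Finset.range i, (α ^ 2) ^ t := by
      refine Finset.sum_bij' (fun j _ => i - j) (fun t _ => i - t) ?_ ?_ ?_ ?_ ?_
      · intro a ha; simp only [Finset.mem_Icc] at ha; simp only [Finset.mem_range]; omega
      · intro a ha; simp only [Finset.mem_range] at ha; simp only [Finset.mem_Icc]; omega
      · intro a ha; simp only [Finset.mem_Icc] at ha; show i - (i - a) = a; omega
      · intro a ha; simp only [Finset.mem_range] at ha; show i - (i - a) = a; omega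
      · intro a ha; rfl
    rw [heq, one_div]
    rw [← tsum_geometric_of_lt_one hβ0 hβ1]
    exact (summable_geometric_of_lt_one hβ0 hβ1).sum_le_tsum (Finset.range i)
      (fun t _ => pow_nonneg hβ0 t)
  -- main summed bound
  have hsum : ∀ w : EuclideanSpace ℝ (Fin n),
      ∑ j ∈ Finset.Icc 1 m, ‖filtEmbed Ls m α j w‖ ^ 2 ≤ 1 / (1 - α ^ 2) * ‖w‖ ^ 2 := by
    intro w
    calc ∑ j ∈ Finset.Icc 1 m, ‖filtEmbed Ls m α j w‖ ^ 2
        = ∑ j ∈ Finset.Icc 1 m, ∑ i ∈ Finset.Icc j m, (α ^ 2) ^ (i - j) * ‖P i w‖ ^ 2 :=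
          Finset.sum_congr rfl fun j hj =>
            hnorm j (Finset.mem_Icc.mp hj).1 w
      _ = ∑ i ∈ Finset.Icc 1 m, ∑ j ∈ Finset.Icc 1 i, (α ^ 2) ^ (i - j) * ‖P i w‖ ^ 2 := by
          refine Finset.sum_comm' ?_
          intro j i
          simp only [Finset.mem_Icc]
          omega
      _ = ∑ i ∈ Finset.Icc 1 m, (∑ j ∈ Finset.Icc 1 i, (α ^ 2) ^ (i - j)) * ‖P i w‖ ^ 2 := by
          refine Finset.sum_congr rfl fun i _ => ?_
          rw [Finset.sum_mul]
      _ ≤ ∑ i ∈ Finset.Icc 1 m, 1 / (1 - α ^ 2) * ‖P i w‖ ^ 2 := by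
          refine Finset.sum_le_sum fun i _ => ?_
          exact mul_le_mul_of_nonneg_right (hgeo i) (sq_nonneg _)
      _ = 1 / (1 - α ^ 2) * ∑ i ∈ Finset.Icc 1 m, ‖P i w‖ ^ 2 := by
          rw [Finset.mul_sum]
      _ ≤ 1 / (1 - α ^ 2) * ‖w‖ ^ 2 := by
          refine mul_le_mul_of_nonneg_left ?_ (by positivity)
          exact sum_norm_sq_proj_le (Finset.Icc 1 m) V hVorth w
  -- linearity of the embedding
  have hlin : ∀ j (a b : EuclideanSpace ℝ (Fin n)),
      filtEmbed Ls m α j (a - b) = filtEmbed Ls m α j a - filtEmbed Ls m α j b := by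
    intro j a b
    simp only [filtEmbed, map_sub, Submodule.coe_sub, smul_sub, Finset.sum_sub_distrib]
  -- main per-lattice-point bound
  set S := ∑ j ∈ Finset.Icc 1 m,
      Metric.infDist (filtEmbed Ls m α j z)
        (filtEmbed Ls m α j '' (L : Set (EuclideanSpace ℝ (Fin n)))) ^ 2 with hS
  have hSnonneg : 0 ≤ S := Finset.sum_nonneg fun j _ => sq_nonneg _
  have claim : ∀ v ∈ (L : Set (EuclideanSpace ℝ (Fin n))),
      S ≤ 1 / (1 - α ^ 2) * ‖z - v‖ ^ 2 := by
    intro v hv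
    have h1 : S ≤ ∑ j ∈ Finset.Icc 1 m, ‖filtEmbed Ls m α j (z - v)‖ ^ 2 := by
      refine Finset.sum_le_sum fun j _ => ?_
      have h2 : Metric.infDist (filtEmbed Ls m α j z)
          (filtEmbed Ls m α j '' (L : Set (EuclideanSpace ℝ (Fin n))))
            ≤ ‖filtEmbed Ls m α j (z - v)‖ := by
        have := Metric.infDist_le_dist_of_mem
          (x := filtEmbed Ls m α j z) (Set.mem_image_of_mem (filtEmbed Ls m α j) hv)
        rwa [dist_eq_norm, ← hlin] at this
      exact pow_le_pow_left₀ Metric.infDist_nonneg h2 2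
    exact h1.trans (hsum (z - v))
  -- pass to the infimum
  have hne : (L : Set (EuclideanSpace ℝ (Fin n))).Nonempty := ⟨0, L.zero_mem⟩
  have hsqrt : Real.sqrt (S * (1 - α ^ 2))
      ≤ Metric.infDist z (L : Set (EuclideanSpace ℝ (Fin n))) := by
    by_contra h
    push_neg at h
    obtain ⟨v, hv, hdist⟩ := (Metric.infDist_lt_iff hne).mp h
    have h1 : S ≤ 1 / (1 - α ^ 2) * ‖z - v‖ ^ 2 := claim v hv
    have h2 : S * (1 - α ^ 2) ≤ ‖z - v‖ ^ 2 := by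
      rw [div_mul_eq_mul_div, one_mul] at h1
      calc S * (1 - α ^ 2) ≤ (‖z - v‖ ^ 2 / (1 - α ^ 2)) * (1 - α ^ 2) :=
            mul_le_mul_of_nonneg_right h1 hα2.le
        _ = ‖z - v‖ ^ 2 := div_mul_cancel₀ _ hα2.ne'
    have h3 : Real.sqrt (S * (1 - α ^ 2)) ≤ ‖z - v‖ := by
      rw [← Real.sqrt_sq (norm_nonneg (z - v))]
      exact Real.sqrt_le_sqrt h2
    rw [← dist_eq_norm] at h3
    linarith
  have h4 : S * (1 - α ^ 2)
      ≤ Metric.infDist z (L : Set (EuclideanSpace ℝ (Fin n))) ^ 2 := by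
    have := pow_le_pow_left₀ (Real.sqrt_nonneg _) hsqrt 2
    rwa [Real.sq_sqrt (mul_nonneg hSnonneg hα2.le)] at this
  calc S = S * (1 - α ^ 2) * (1 / (1 - α ^ 2)) := by field_simp
    _ ≤ Metric.infDist z (L : Set (EuclideanSpace ℝ (Fin n))) ^ 2 * (1 / (1 - α ^ 2)) :=
        mul_le_mul_of_nonneg_right h4 (by positivity)
    _ = 1 / (1 - α ^ 2) * Metric.infDist z (L : Set (EuclideanSpace ℝ (Fin n))) ^ 2 := by ring
end
end

section
/- Let {0} = L_0 ⊂ L_1 ⊂ ⋯ ⊂ L_m = L be a (q, γ)-filtration of a full-rank lattice L ⊆ ℝⁿ, let 1/γ ≤ α < 1, and for 1 ≤ j ≤ m let E_{j,α}(x) = Σ_{i=j}^m α^{i−j}·π_i(x), where π_i is the orthogonal projection onto span(L_i) ∩ span(L_{i−1})^⊥. Then for every 1 ≤ j ≤ m: λ₁(E_{j,α}(L)) = λ₁(L_j/L_{j−1}). -/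
open Metric Submodule
noncomputable section

open scoped RealInnerProductSpace

section AuxProj

variable {F : Type*} [NormedAddCommGroup F] [InnerProductSpace ℝ F] [FiniteDimensional ℝ F]

/-- The projection onto `V ⊓ Uᗮ` agrees with the projection onto `Uᗮ` on `V`, when `U ≤ V`. -/
lemma projA (U V : Submodule ℝ F) (hUV : U ≤ V) (x : F) (hx : x ∈ V) :
    ((orthogonalProjection (V ⊓ Uᗮ) x : F)) = (orthogonalProjection Uᗮ x : F) := by
  apply eq_starProjection_of_mem_of_inner_eq_zero (K := V ⊓ Uᗮ)
  · refine Submodule.mem_inf.2 ⟨?_, (orthogonalProjection Uᗮ x).2⟩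
    rw [← starProjection_apply, starProjection_orthogonal_val]
    exact sub_mem hx (hUV (orthogonalProjection U x).2)
  · intro w hw
    rw [← starProjection_apply, starProjection_orthogonal_val, sub_sub_cancel]
    exact (Submodule.mem_inf.1 hw).2 _ (orthogonalProjection U x).2

/-- Projection onto `W` vanishes on vectors orthogonal to `W`. -/
lemma projB (W V : Submodule ℝ F) (h : W ≤ Vᗮ) (x : F) (hx : x ∈ V) :
    ((orthogonalProjection W x : F)) = 0 := by
  have hx' : x ∈ Wᗮ := by
    intro w hw
    exact inner_eq_zero_symm.1 (h hw x hx)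
  simp [orthogonalProjection_mem_subspace_orthogonalComplement_eq_zero hx']

/-- The projection onto `V ⊓ Uᗮ` is the difference of the projections onto `V` and `U`. -/
lemma projC (U V : Submodule ℝ F) (hUV : U ≤ V) (x : F) :
    ((orthogonalProjection (V ⊓ Uᗮ) x : F))
      = (orthogonalProjection V x : F) - (orthogonalProjection U x : F) := by
  apply eq_starProjection_of_mem_of_inner_eq_zero (K := V ⊓ Uᗮ)
  · refine Submodule.mem_inf.2
      ⟨sub_mem (orthogonalProjection V x).2 (hUV (orthogonalProjection U x).2), ?_⟩
    intro u hu
    have h1 : ⟪x - (orthogonalProjection V x : F), u⟫ = 0 :=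
      starProjection_inner_eq_zero x u (hUV hu)
    have h2 : ⟪x - (orthogonalProjection U x : F), u⟫ = 0 :=
      starProjection_inner_eq_zero x u hu
    rw [inner_sub_left] at h1 h2
    rw [real_inner_comm, inner_sub_left]; linarith
  · intro w hw
    obtain ⟨hwV, hwU⟩ := Submodule.mem_inf.1 hw
    have h1 : ⟪x - (orthogonalProjection V x : F), w⟫ = 0 :=
      starProjection_inner_eq_zero x w hwV
    have h2 : ⟪(orthogonalProjection U x : F), w⟫ = 0 :=
      hwU _ (orthogonalProjection U x).2
    have h3 : x - ((orthogonalProjection V x : F) - (orthogonalProjection U x : F))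
        = (x - (orthogonalProjection V x : F)) + (orthogonalProjection U x : F) := by abel
    rw [h3, inner_add_left, h1, h2, add_zero]

/-- Telescoping sum over `Icc (a+1) b`. -/
lemma teleSum (f : ℕ → F) (a b : ℕ) (hab : a ≤ b) :
    ∑ i ∈ Finset.Icc (a + 1) b, (f i - f (i - 1)) = f b - f a := by
  induction b, hab using Nat.le_induction with
  | base => simp
  | succ b hab ih =>
    rw [Finset.sum_Icc_succ_top (by omega), ih]
    simp only [Nat.add_sub_cancel]
    abel

end AuxProj

/-- The real span of `Ls i`. -/
def Vsp {n : ℕ} (Ls : ℕ → Submodule ℤ (EuclideanSpace ℝ (Fin n))) (i : ℕ) :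
    Submodule ℝ (EuclideanSpace ℝ (Fin n)) :=
  Submodule.span ℝ (Ls i : Set (EuclideanSpace ℝ (Fin n)))

/-- The projection onto `span(L_i) ∩ span(L_{i-1})ᗮ`. -/
def piP {n : ℕ} (Ls : ℕ → Submodule ℤ (EuclideanSpace ℝ (Fin n))) (i : ℕ)
    (x : EuclideanSpace ℝ (Fin n)) : EuclideanSpace ℝ (Fin n) :=
  (orthogonalProjection (Vsp Ls i ⊓ (Vsp Ls (i - 1))ᗮ) x : EuclideanSpace ℝ (Fin n))

lemma filtEmbed_eq_sum {n : ℕ} (Ls : ℕ → Submodule ℤ (EuclideanSpace ℝ (Fin n))) (m : ℕ)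
    (α : ℝ) (j : ℕ) (x : EuclideanSpace ℝ (Fin n)) :
    filtEmbed Ls m α j x = ∑ i ∈ Finset.Icc j m, α ^ (i - j) • piP Ls i x := rfl

/-- For a `(q, γ)`-filtration of `L` and `1/γ ≤ α < 1`, the shortest nonzero vector of the
compressed projection `E_{j,α}(L)` has the same length as that of `L_j/L_{j−1}`. -/
theorem lambda1_filtEmbed_eq
    (n : ℕ) (L : Submodule ℤ (EuclideanSpace ℝ (Fin n))) [DiscreteTopology L] (hL : IsZLattice ℝ L)
    (m : ℕ) (Ls : ℕ → Submodule ℤ (EuclideanSpace ℝ (Fin n))) (q γ : ℝ) (hq : 1 ≤ q) (hγ : 1 < γ)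
    (hfil : IsQGFiltration L m Ls q γ)
    (α : ℝ) (hα0 : 1 / γ ≤ α) (hα1 : α < 1) (j : ℕ) (hj1 : 1 ≤ j) (hjm : j ≤ m) :
    lambda1 (filtEmbed Ls m α j '' (L : Set (EuclideanSpace ℝ (Fin n)))) = lambda1 (quotLat Ls j) := by
  classical
  obtain ⟨⟨hLs0, hLsm, hltc, hprim⟩, hcov, hgap⟩ := hfil
  have hmono : ∀ a b : ℕ, a ≤ b → b ≤ m → Ls a ≤ Ls b := by
    intro a b hab hbm
    induction b, hab using Nat.le_induction with
    | base => exact le_rfl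
    | succ b hab ih => exact (ih (by omega)).trans (hltc b (by omega)).le
  have hVmono : ∀ a b : ℕ, a ≤ b → b ≤ m → Vsp Ls a ≤ Vsp Ls b := fun a b h1 h2 =>
    Submodule.span_mono (SetLike.coe_subset_coe.2 (hmono a b h1 h2))
  have hVm : Vsp Ls m = ⊤ := by
    rw [Vsp, hLsm]; exact hL.span_top
  have hmemL : ∀ k, k ≤ m → ∀ y, y ∈ Ls k → y ∈ L := fun k hk y hy =>
    hLsm ▸ hmono k m hk le_rfl hy
  have hpiV : ∀ (i : ℕ) (x : EuclideanSpace ℝ (Fin n)), piP Ls i x ∈ Vsp Ls i := fun i x =>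
    (Submodule.mem_inf.1 (orthogonalProjection (Vsp Ls i ⊓ (Vsp Ls (i - 1))ᗮ) x).2).1
  have hpiO : ∀ (i : ℕ) (x : EuclideanSpace ℝ (Fin n)), piP Ls i x ∈ (Vsp Ls (i - 1))ᗮ :=
    fun i x => (Submodule.mem_inf.1 (orthogonalProjection (Vsp Ls i ⊓ (Vsp Ls (i - 1))ᗮ) x).2).2
  have hvanish : ∀ a i : ℕ, a ≤ i - 1 → i - 1 ≤ m → ∀ y ∈ Vsp Ls a, piP Ls i y = 0 := by
    intro a i hai him y hy
    exact projB _ _ (le_trans inf_le_right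
      (Submodule.orthogonal_le (hVmono a (i - 1) hai him))) y hy
  -- `E_{j,α}` agrees with the quotient projection on `L_j`
  have hEy : ∀ y ∈ (Ls j : Set (EuclideanSpace ℝ (Fin n))),
      filtEmbed Ls m α j y
        = ((orthogonalProjection (Vsp Ls (j - 1))ᗮ) y : EuclideanSpace ℝ (Fin n)) := by
    intro y hy
    have hyV : y ∈ Vsp Ls j := Submodule.subset_span hy
    rw [filtEmbed_eq_sum, Finset.sum_eq_single_of_mem j (Finset.mem_Icc.2 ⟨le_rfl, hjm⟩)]
    · rw [Nat.sub_self, pow_zero, one_smul]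
      exact projA _ _ (hVmono (j - 1) j (by omega) hjm) y hyV
    · intro i hi hne
      rw [Finset.mem_Icc] at hi
      rw [hvanish j i (by omega) (by omega) y hyV, smul_zero]
  have hsub : quotLat Ls j ⊆ filtEmbed Ls m α j '' (L : Set (EuclideanSpace ℝ (Fin n))) := by
    rintro z ⟨y, hy, rfl⟩
    exact ⟨y, hmemL j hjm y hy, hEy y hy⟩
  -- a nonzero element of the quotient lattice
  have hjj : j - 1 + 1 = j := Nat.succ_pred_eq_of_pos hj1
  obtain ⟨y₀, hy₀j, hy₀n⟩ : ∃ y ∈ Ls j, y ∉ Ls (j - 1) := by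
    have h := hltc (j - 1) (by omega)
    rw [hjj] at h
    exact SetLike.exists_of_lt h
  set z₀ : EuclideanSpace ℝ (Fin n) :=
    ((orthogonalProjection (Vsp Ls (j - 1))ᗮ) y₀ : EuclideanSpace ℝ (Fin n)) with hz₀
  have hz₀mem : z₀ ∈ quotLat Ls j := ⟨y₀, hy₀j, rfl⟩
  have hz₀ne : z₀ ≠ 0 := by
    intro h
    have h2 : y₀ - (orthogonalProjection (Vsp Ls (j - 1)) y₀ : EuclideanSpace ℝ (Fin n)) = 0 := by
      rw [← starProjection_apply, ← starProjection_orthogonal_val]; exact h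
    have h3 : y₀ ∈ Vsp Ls (j - 1) := by
      rw [sub_eq_zero.1 h2]; exact (orthogonalProjection (Vsp Ls (j - 1)) y₀).2
    have hyL : y₀ ∈ L := hmemL j hjm y₀ hy₀j
    have h4 : y₀ ∈ (Ls (j - 1) : Set (EuclideanSpace ℝ (Fin n))) := by
      rw [hprim (j - 1) (by omega)]; exact ⟨hyL, h3⟩
    exact hy₀n h4
  have hbdd : ∀ A : Set (EuclideanSpace ℝ (Fin n)), BddBelow (norm '' (A \ {0})) := by
    intro A; exact ⟨0, by rintro r ⟨x, _, rfl⟩; exact norm_nonneg x⟩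
  have hnonneg : ∀ A : Set (EuclideanSpace ℝ (Fin n)), 0 ≤ lambda1 A := by
    intro A
    exact Real.sInf_nonneg (by rintro r ⟨x, _, rfl⟩; exact norm_nonneg x)
  have hγ0 : (0 : ℝ) < γ := lt_trans one_pos hγ
  have hαpos : (0 : ℝ) < α := lt_of_lt_of_le (by positivity) hα0
  have hαγ : 1 ≤ α * γ := by
    rw [div_le_iff₀ hγ0] at hα0
    linarith
  have hgrow : ∀ k, j ≤ k → k ≤ m →
      γ ^ (k - j) * lambda1 (quotLat Ls j) ≤ lambda1 (quotLat Ls k) := by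
    intro k hjk hkm
    induction k, hjk using Nat.le_induction with
    | base => simp
    | succ k hjk ih =>
      have h1 : γ * lambda1 (quotLat Ls k) ≤ lambda1 (quotLat Ls (k + 1)) :=
        hgap k (by omega) (by omega)
      have h2 := ih (by omega)
      have h3 : γ ^ (k + 1 - j) = γ * γ ^ (k - j) := by
        rw [show k + 1 - j = (k - j) + 1 by omega, pow_succ]; ring
      rw [h3, mul_assoc]
      calc γ * (γ ^ (k - j) * lambda1 (quotLat Ls j))
          ≤ γ * lambda1 (quotLat Ls k) := mul_le_mul_of_nonneg_left h2 hγ0.le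
        _ ≤ lambda1 (quotLat Ls (k + 1)) := h1
  -- lower bound for every nonzero image point
  have hlow : ∀ x, x ∈ (L : Set (EuclideanSpace ℝ (Fin n))) →
      filtEmbed Ls m α j x ≠ 0 →
      lambda1 (quotLat Ls j) ≤ ‖filtEmbed Ls m α j x‖ := by
    intro x hxL hEne
    have hSne : ((Finset.Icc j m).filter (fun i => piP Ls i x ≠ 0)).Nonempty := by
      by_contra h
      apply hEne
      rw [filtEmbed_eq_sum]
      apply Finset.sum_eq_zero
      intro i hi
      have hzero : piP Ls i x = 0 := by
        by_contra hne
        exact h ⟨i, Finset.mem_filter.2 ⟨hi, hne⟩⟩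
      rw [hzero, smul_zero]
    obtain ⟨k, hkmem, hkmax⟩ : ∃ k, k ∈ (Finset.Icc j m).filter (fun i => piP Ls i x ≠ 0) ∧
        ∀ i ∈ (Finset.Icc j m).filter (fun i => piP Ls i x ≠ 0), i ≤ k :=
      ⟨_, Finset.max'_mem _ hSne, fun i hi => Finset.le_max' _ i hi⟩
    rw [Finset.mem_filter, Finset.mem_Icc] at hkmem
    obtain ⟨⟨hjk, hkm⟩, hπkne⟩ := hkmem
    have hmax : ∀ i, k < i → i ≤ m → piP Ls i x = 0 := by
      intro i hki him
      by_contra hne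
      exact absurd (hkmax i (Finset.mem_filter.2 ⟨Finset.mem_Icc.2 ⟨by omega, him⟩, hne⟩))
        (by omega)
    have hxVk : x ∈ Vsp Ls k := by
      have htop : (orthogonalProjection (Vsp Ls m) x : EuclideanSpace ℝ (Fin n)) = x :=
        (starProjection_eq_self_iff (K := Vsp Ls m)).2 (by rw [hVm]; trivial)
      have htele := teleSum
        (fun i => (orthogonalProjection (Vsp Ls i) x : EuclideanSpace ℝ (Fin n))) k m hkm
      have hzero : ∑ i ∈ Finset.Icc (k + 1) m,
          ((orthogonalProjection (Vsp Ls i) x : EuclideanSpace ℝ (Fin n))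
            - (orthogonalProjection (Vsp Ls (i - 1)) x : EuclideanSpace ℝ (Fin n))) = 0 := by
        apply Finset.sum_eq_zero
        intro i hi
        rw [Finset.mem_Icc] at hi
        rw [← projC _ _ (hVmono (i - 1) i (by omega) (by omega))]
        exact hmax i (by omega) hi.2
      rw [hzero] at htele
      have heq : (orthogonalProjection (Vsp Ls k) x : EuclideanSpace ℝ (Fin n)) = x := by
        have h5 := (sub_eq_zero.1 htele.symm).symm
        exact h5.trans htop
      exact (starProjection_eq_self_iff (K := Vsp Ls k)).1 heq
    have hπk_eq : piP Ls k x
        = ((orthogonalProjection (Vsp Ls (k - 1))ᗮ) x : EuclideanSpace ℝ (Fin n)) :=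
      projA _ _ (hVmono (k - 1) k (by omega) hkm) x hxVk
    have hxLk : x ∈ (Ls k : Set (EuclideanSpace ℝ (Fin n))) := by
      rw [hprim k hkm]; exact ⟨hxL, hxVk⟩
    have hπk_mem : piP Ls k x ∈ quotLat Ls k := ⟨x, hxLk, hπk_eq.symm⟩
    have hlamk : lambda1 (quotLat Ls k) ≤ ‖piP Ls k x‖ :=
      csInf_le (hbdd _) ⟨piP Ls k x, ⟨hπk_mem, hπkne⟩, rfl⟩
    have hinner : ⟪filtEmbed Ls m α j x, piP Ls k x⟫ = α ^ (k - j) * ‖piP Ls k x‖ ^ 2 := by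
      rw [filtEmbed_eq_sum, sum_inner,
        Finset.sum_eq_single_of_mem k (Finset.mem_Icc.2 ⟨hjk, hkm⟩)]
      · rw [real_inner_smul_left, real_inner_self_eq_norm_sq]
      · intro i hi hne
        rw [Finset.mem_Icc] at hi
        rcases lt_or_gt_of_ne hne with hlt' | hgt'
        · rw [real_inner_smul_left]
          have h1 : piP Ls i x ∈ Vsp Ls (k - 1) :=
            hVmono i (k - 1) (by omega) (by omega) (hpiV i x)
          have h2 : ⟪piP Ls i x, piP Ls k x⟫ = 0 :=
            (Submodule.mem_orthogonal _ _).1 (hpiO k x) _ h1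
          rw [h2, mul_zero]
        · rw [hmax i hgt' hi.2, smul_zero, inner_zero_left]
    have hπpos : 0 < ‖piP Ls k x‖ := norm_pos_iff.2 hπkne
    have hcs := real_inner_le_norm (filtEmbed Ls m α j x) (piP Ls k x)
    rw [hinner] at hcs
    have hEb : α ^ (k - j) * ‖piP Ls k x‖ ≤ ‖filtEmbed Ls m α j x‖ := by
      nlinarith [hπpos, norm_nonneg (filtEmbed Ls m α j x)]
    have hpow : 1 ≤ (α * γ) ^ (k - j) := one_le_pow₀ hαγ
    calc lambda1 (quotLat Ls j)
        ≤ (α * γ) ^ (k - j) * lambda1 (quotLat Ls j) :=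
          le_mul_of_one_le_left (hnonneg _) hpow
      _ = α ^ (k - j) * (γ ^ (k - j) * lambda1 (quotLat Ls j)) := by
          rw [mul_pow]; ring
      _ ≤ α ^ (k - j) * lambda1 (quotLat Ls k) :=
          mul_le_mul_of_nonneg_left (hgrow k hjk hkm) (by positivity)
      _ ≤ α ^ (k - j) * ‖piP Ls k x‖ :=
          mul_le_mul_of_nonneg_left hlamk (by positivity)
      _ ≤ ‖filtEmbed Ls m α j x‖ := hEb
  -- conclusion
  apply le_antisymm
  · apply csInf_le_csInf (hbdd _)
    · exact ⟨‖z₀‖, z₀, ⟨hz₀mem, hz₀ne⟩, rfl⟩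
    · exact Set.image_mono (Set.diff_subset_diff_left hsub)
  · apply le_csInf
    · refine ⟨‖z₀‖, z₀, ⟨hsub hz₀mem, hz₀ne⟩, rfl⟩
    · rintro r ⟨w, ⟨⟨x, hxL, rfl⟩, hwne⟩, rfl⟩
      exact hlow x hxL (by simpa using hwne)
end
end

section
/- There exists an absolute constant c_E > 0 with the following property. Let {0} = L_0 ⊂ L_1 ⊂ ⋯ ⊂ L_m = L be a (q, γ)-filtration of a full-rank lattice L ⊆ ℝⁿ with γ ≥ 2 and q ≤ γ²/32, let 1/2 ≤ α < 1, and for 1 ≤ j ≤ m let E_{j,α}(x) = Σ_{i=j}^m α^{i−j}·π_i(x), where π_i is the orthogonal projection onto span(L_i) ∩ span(L_{i−1})^⊥. Then for all x, y ∈ ℝⁿ: Σ_{j=1}^m min(dist(E_{j,α}(x − y), E_{j,α}(L)), q²·λ₁(E_{j,α}(L)))² ≥ c_E · dist(x − y, L)². -/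
open Metric Submodule
noncomputable section

section AuxProj
open RealInnerProductSpace

variable {n : ℕ} (Ls : ℕ → Submodule ℤ (EuclideanSpace ℝ (Fin n)))

/-- Real span of the `j`-th sublattice. -/
def auxV (j : ℕ) : Submodule ℝ (EuclideanSpace ℝ (Fin n)) :=
  Submodule.span ℝ (Ls j : Set (EuclideanSpace ℝ (Fin n)))

/-- The `j`-th block subspace. -/
def auxW (j : ℕ) : Submodule ℝ (EuclideanSpace ℝ (Fin n)) :=
  auxV Ls j ⊓ (auxV Ls (j - 1))ᗮ

/-- Projection onto the `j`-th block. -/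
def auxP (j : ℕ) (x : EuclideanSpace ℝ (Fin n)) : EuclideanSpace ℝ (Fin n) :=
  (orthogonalProjection (auxW Ls j) x : EuclideanSpace ℝ (Fin n))

/-- Projection onto the span of the `j`-th sublattice. -/
def auxQ (j : ℕ) (x : EuclideanSpace ℝ (Fin n)) : EuclideanSpace ℝ (Fin n) :=
  (orthogonalProjection (auxV Ls j) x : EuclideanSpace ℝ (Fin n))

variable {Ls}

lemma auxP_mem (j : ℕ) (x : EuclideanSpace ℝ (Fin n)) : auxP Ls j x ∈ auxW Ls j :=
  SetLike.coe_mem _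

lemma auxQ_mem (j : ℕ) (x : EuclideanSpace ℝ (Fin n)) : auxQ Ls j x ∈ auxV Ls j :=
  SetLike.coe_mem _

lemma auxP_eq_zero_of_mem_orthogonal {j : ℕ} {x : EuclideanSpace ℝ (Fin n)}
    (h : x ∈ (auxW Ls j)ᗮ) : auxP Ls j x = 0 := by
  unfold auxP
  rw [orthogonalProjection_mem_subspace_orthogonalComplement_eq_zero h]
  rfl

lemma mem_orthogonal_auxW_of_mem_auxV {k j : ℕ} {x : EuclideanSpace ℝ (Fin n)}
    (hkj : k ≤ j - 1) (hx : x ∈ auxV Ls k) (hle : auxV Ls k ≤ auxV Ls (j - 1)) :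
    x ∈ (auxW Ls j)ᗮ := by
  intro w hw
  have hw' : w ∈ (auxV Ls (j - 1))ᗮ := hw.2
  have := (Submodule.mem_orthogonal' _ _).1 ((auxV Ls (j-1)).le_orthogonal_orthogonal (hle hx)) w hw'
  rwa [real_inner_comm] at this

lemma auxP_sub (j : ℕ) (x y : EuclideanSpace ℝ (Fin n)) :
    auxP Ls j (x - y) = auxP Ls j x - auxP Ls j y := by
  unfold auxP; rw [map_sub]; rfl

lemma auxQ_sub (j : ℕ) (x y : EuclideanSpace ℝ (Fin n)) :
    auxQ Ls j (x - y) = auxQ Ls j x - auxQ Ls j y := by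
  unfold auxQ; rw [map_sub]; rfl

lemma auxQ_eq_self {j : ℕ} {x : EuclideanSpace ℝ (Fin n)} (hx : x ∈ auxV Ls j) :
    auxQ Ls j x = x := (Submodule.starProjection_eq_self_iff (K := auxV Ls j)).2 hx

lemma norm_auxP_le (j : ℕ) (x : EuclideanSpace ℝ (Fin n)) : ‖auxP Ls j x‖ ≤ ‖x‖ := by
  have h := orthogonalProjection_norm_le (auxW Ls j)
  calc ‖auxP Ls j x‖ = ‖orthogonalProjection (auxW Ls j) x‖ := rfl
    _ ≤ ‖(orthogonalProjection (auxW Ls j) : EuclideanSpace ℝ (Fin n) →L[ℝ] auxW Ls j)‖ * ‖x‖ :=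
        ContinuousLinearMap.le_opNorm _ _
    _ ≤ 1 * ‖x‖ := by
        apply mul_le_mul_of_nonneg_right h (norm_nonneg _)
    _ = ‖x‖ := one_mul _

/-- key decomposition: projection onto `V j` splits as projection onto `V (j-1)` plus the
`j`-th block projection. -/
lemma auxQ_decomp {j : ℕ} (hle : auxV Ls (j - 1) ≤ auxV Ls j) (x : EuclideanSpace ℝ (Fin n)) :
    auxQ Ls j x = auxQ Ls (j - 1) x + auxP Ls j x := by
  have key : auxP Ls j x = auxQ Ls j x - auxQ Ls (j - 1) x := by
    apply Submodule.eq_starProjection_of_mem_of_inner_eq_zero (K := auxW Ls j) (u := x)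
    · constructor
      · exact Submodule.sub_mem _ (auxQ_mem j x) (hle (auxQ_mem (j - 1) x))
      · intro u hu
        have h1 : ⟪x - auxQ Ls j x, u⟫ = 0 := Submodule.starProjection_inner_eq_zero (K := auxV Ls j) x u (hle hu)
        have h2 : ⟪x - auxQ Ls (j - 1) x, u⟫ = 0 := Submodule.starProjection_inner_eq_zero (K := auxV Ls (j - 1)) x u hu
        have h3 : auxQ Ls j x - auxQ Ls (j - 1) x
            = (x - auxQ Ls (j - 1) x) - (x - auxQ Ls j x) := by abel
        rw [real_inner_comm, h3, inner_sub_left, h1, h2, sub_zero]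
    · intro w hw
      have e1 : ⟪x - auxQ Ls j x, w⟫ = 0 := by
        have hxw : x - auxQ Ls j x ∈ (auxV Ls j)ᗮ := Submodule.sub_starProjection_mem_orthogonal (K := auxV Ls j) x
        exact (Submodule.mem_orthogonal' _ _).1 hxw w hw.1
      have e2 : ⟪auxQ Ls (j - 1) x, w⟫ = 0 := by
        have hw2 : w ∈ (auxV Ls (j - 1))ᗮ := hw.2
        have := (Submodule.mem_orthogonal _ _).1 hw2 (auxQ Ls (j-1) x) (auxQ_mem (j-1) x)
        rwa [real_inner_comm] at this ⊢
      have : x - (auxQ Ls j x - auxQ Ls (j - 1) x) = (x - auxQ Ls j x) + auxQ Ls (j-1) x := by abel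
      rw [this, inner_add_left, e1, e2, add_zero]
  rw [key]; abel

end AuxProj
section AuxSum
open RealInnerProductSpace

variable {n : ℕ} {Ls : ℕ → Submodule ℤ (EuclideanSpace ℝ (Fin n))} {m : ℕ}

/-- Pythagoras for finite sums of pairwise orthogonal vectors. -/
lemma norm_sum_sq_of_orth {ι : Type*} (s : Finset ι) (f : ι → EuclideanSpace ℝ (Fin n))
    (h : ∀ i ∈ s, ∀ j ∈ s, i ≠ j → ⟪f i, f j⟫ = 0) :
    ‖∑ i ∈ s, f i‖ ^ 2 = ∑ i ∈ s, ‖f i‖ ^ 2 := by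
  rw [← real_inner_self_eq_norm_sq, sum_inner]
  refine Finset.sum_congr rfl fun i hi => ?_
  rw [inner_sum, Finset.sum_eq_single i (fun j hj hji => h i hi j hj (Ne.symm hji))
    (fun hi' => absurd hi hi'), real_inner_self_eq_norm_sq]

lemma inner_blocks_eq_zero (hmono : ∀ a b, a ≤ b → b ≤ m → auxV Ls a ≤ auxV Ls b)
    {i j : ℕ} (hij : i < j) (hjm : j ≤ m) {a b : EuclideanSpace ℝ (Fin n)}
    (ha : a ∈ auxW Ls i) (hb : b ∈ auxW Ls j) : ⟪a, b⟫ = 0 := by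
  have hle : auxV Ls i ≤ auxV Ls (j - 1) := hmono i (j - 1) (by omega) (by omega)
  exact (Submodule.mem_orthogonal _ _).1 hb.2 a (hle ha.1)

lemma inner_auxV_block_eq_zero (hmono : ∀ a b, a ≤ b → b ≤ m → auxV Ls a ≤ auxV Ls b)
    {k i : ℕ} (hki : k ≤ i - 1) (him : i - 1 ≤ m) {a b : EuclideanSpace ℝ (Fin n)}
    (ha : a ∈ auxV Ls k) (hb : b ∈ auxW Ls i) : ⟪a, b⟫ = 0 := by
  have hle : auxV Ls k ≤ auxV Ls (i - 1) := hmono k (i - 1) hki him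
  exact (Submodule.mem_orthogonal _ _).1 hb.2 a (hle ha)

lemma auxP_zero_of_mem_low (hmono : ∀ a b, a ≤ b → b ≤ m → auxV Ls a ≤ auxV Ls b)
    {k i : ℕ} (hki : k ≤ i - 1) (him : i - 1 ≤ m) {x : EuclideanSpace ℝ (Fin n)}
    (hx : x ∈ auxV Ls k) : auxP Ls i x = 0 := by
  apply auxP_eq_zero_of_mem_orthogonal
  intro w hw
  have := inner_auxV_block_eq_zero hmono hki him hx hw
  rwa [real_inner_comm] at this

lemma auxV_zero (hbot : Ls 0 = ⊥) : auxV Ls 0 = ⊥ := by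
  unfold auxV
  rw [hbot]
  simp

lemma auxQ_zero (hbot : Ls 0 = ⊥) (x : EuclideanSpace ℝ (Fin n)) : auxQ Ls 0 x = 0 := by
  have hx : x ∈ (auxV Ls 0)ᗮ := by
    intro u hu
    rw [auxV_zero hbot, Submodule.mem_bot] at hu
    simp [hu]
  unfold auxQ
  rw [orthogonalProjection_mem_subspace_orthogonalComplement_eq_zero hx]
  rfl

lemma sum_auxP_Ioc_zero (hbot : Ls 0 = ⊥)
    (hmono : ∀ a b, a ≤ b → b ≤ m → auxV Ls a ≤ auxV Ls b) :
    ∀ k, k ≤ m → ∀ x : EuclideanSpace ℝ (Fin n),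
      ∑ i ∈ Finset.Ioc 0 k, auxP Ls i x = auxQ Ls k x := by
  intro k
  induction k with
  | zero => intro _ x; simp [auxQ_zero hbot x]
  | succ k ih =>
    intro hk x
    rw [Finset.sum_Ioc_succ_top (Nat.zero_le k), ih (by omega) x]
    have hle : auxV Ls ((k + 1) - 1) ≤ auxV Ls (k + 1) := by
      simpa using hmono k (k + 1) (by omega) hk
    have := auxQ_decomp hle x
    simpa using this.symm

lemma auxQ_top_eq (htop : auxV Ls m = ⊤) (x : EuclideanSpace ℝ (Fin n)) : auxQ Ls m x = x :=
  auxQ_eq_self (htop ▸ Submodule.mem_top)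

lemma sum_auxP_Ioc (hbot : Ls 0 = ⊥) (htop : auxV Ls m = ⊤)
    (hmono : ∀ a b, a ≤ b → b ≤ m → auxV Ls a ≤ auxV Ls b)
    {k : ℕ} (hk : k ≤ m) (x : EuclideanSpace ℝ (Fin n)) :
    ∑ i ∈ Finset.Ioc k m, auxP Ls i x = x - auxQ Ls k x := by
  have hdisj : Disjoint (Finset.Ioc 0 k) (Finset.Ioc k m) := by
    rw [Finset.disjoint_left]
    intro a ha hb
    simp only [Finset.mem_Ioc] at ha hb
    omega
  have hun : Finset.Ioc 0 k ∪ Finset.Ioc k m = Finset.Ioc 0 m :=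
    Finset.Ioc_union_Ioc_eq_Ioc (Nat.zero_le k) hk
  have := Finset.sum_union hdisj (f := fun i => auxP Ls i x)
  rw [hun, sum_auxP_Ioc_zero hbot hmono m le_rfl x, sum_auxP_Ioc_zero hbot hmono k hk x,
    auxQ_top_eq htop x] at this
  have h2 : (∑ i ∈ Finset.Ioc k m, auxP Ls i x) + auxQ Ls k x = x := by
    rw [add_comm]; exact this.symm
  exact eq_sub_of_add_eq h2

/-- Orthogonal decomposition of the norm into the low part and the blocks from `J` up. -/
lemma norm_sq_decomp (hbot : Ls 0 = ⊥) (htop : auxV Ls m = ⊤)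
    (hmono : ∀ a b, a ≤ b → b ≤ m → auxV Ls a ≤ auxV Ls b)
    {J : ℕ} (hJm : J - 1 ≤ m) (x : EuclideanSpace ℝ (Fin n)) :
    ‖x‖ ^ 2 = ‖auxQ Ls (J - 1) x‖ ^ 2 + ∑ i ∈ Finset.Ioc (J - 1) m, ‖auxP Ls i x‖ ^ 2 := by
  have hx : x = auxQ Ls (J - 1) x + ∑ i ∈ Finset.Ioc (J - 1) m, auxP Ls i x := by
    rw [sum_auxP_Ioc hbot htop hmono hJm x]; abel
  have horth : ⟪auxQ Ls (J - 1) x, ∑ i ∈ Finset.Ioc (J - 1) m, auxP Ls i x⟫ = 0 := by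
    rw [inner_sum]
    refine Finset.sum_eq_zero fun i hi => ?_
    simp only [Finset.mem_Ioc] at hi
    exact inner_auxV_block_eq_zero hmono (by omega) (by omega)
      (auxQ_mem (J - 1) x) (auxP_mem i x)
  calc ‖x‖ ^ 2 = ‖auxQ Ls (J - 1) x + ∑ i ∈ Finset.Ioc (J - 1) m, auxP Ls i x‖ ^ 2 := by
        rw [← hx]
    _ = ‖auxQ Ls (J - 1) x‖ ^ 2 + 2 * ⟪auxQ Ls (J - 1) x, ∑ i ∈ Finset.Ioc (J - 1) m, auxP Ls i x⟫
        + ‖∑ i ∈ Finset.Ioc (J - 1) m, auxP Ls i x‖ ^ 2 := norm_add_sq_real _ _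
    _ = ‖auxQ Ls (J - 1) x‖ ^ 2 + ∑ i ∈ Finset.Ioc (J - 1) m, ‖auxP Ls i x‖ ^ 2 := by
        rw [horth, norm_sum_sq_of_orth]
        · ring
        · intro i hi j hj hij
          simp only [Finset.mem_Ioc] at hi hj
          rcases Nat.lt_or_ge i j with h | h
          · exact inner_blocks_eq_zero hmono h hj.2 (auxP_mem i x) (auxP_mem j x)
          · have hji : j < i := by omega
            rw [real_inner_comm]
            exact inner_blocks_eq_zero hmono hji hi.2 (auxP_mem j x) (auxP_mem i x)

end AuxSum
section AuxEmbed
open RealInnerProductSpace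

variable {n : ℕ} {Ls : ℕ → Submodule ℤ (EuclideanSpace ℝ (Fin n))} {m : ℕ}

lemma filtEmbed_eq (α : ℝ) (j : ℕ) (x : EuclideanSpace ℝ (Fin n)) :
    filtEmbed Ls m α j x = ∑ i ∈ Finset.Icc j m, α ^ (i - j) • auxP Ls i x := rfl

lemma filtEmbed_sub (α : ℝ) (j : ℕ) (x y : EuclideanSpace ℝ (Fin n)) :
    filtEmbed Ls m α j (x - y) = filtEmbed Ls m α j x - filtEmbed Ls m α j y := by
  simp only [filtEmbed_eq, auxP_sub, smul_sub, Finset.sum_sub_distrib]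

lemma norm_filtEmbed_sq (hmono : ∀ a b, a ≤ b → b ≤ m → auxV Ls a ≤ auxV Ls b)
    (α : ℝ) (j : ℕ) (x : EuclideanSpace ℝ (Fin n)) :
    ‖filtEmbed Ls m α j x‖ ^ 2
      = ∑ i ∈ Finset.Icc j m, (α ^ (i - j)) ^ 2 * ‖auxP Ls i x‖ ^ 2 := by
  rw [filtEmbed_eq, norm_sum_sq_of_orth]
  · refine Finset.sum_congr rfl fun i hi => ?_
    rw [norm_smul, mul_pow, Real.norm_eq_abs, sq_abs]
  · intro i hi j' hj' hij
    simp only [Finset.mem_Icc] at hi hj'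
    rw [real_inner_smul_left, real_inner_smul_right]
    rcases Nat.lt_or_ge i j' with h | h
    · rw [inner_blocks_eq_zero hmono h hj'.2 (auxP_mem i x) (auxP_mem j' x)]; ring
    · have hji : j' < i := by omega
      rw [real_inner_comm, inner_blocks_eq_zero hmono hji hi.2 (auxP_mem j' x) (auxP_mem i x)]
      ring

lemma block_le_norm_filtEmbed (hmono : ∀ a b, a ≤ b → b ≤ m → auxV Ls a ≤ auxV Ls b)
    {α : ℝ} (hα : 0 ≤ α) {j i : ℕ} (hi : i ∈ Finset.Icc j m) (x : EuclideanSpace ℝ (Fin n)) :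
    α ^ (i - j) * ‖auxP Ls i x‖ ≤ ‖filtEmbed Ls m α j x‖ := by
  have h1 : (α ^ (i - j) * ‖auxP Ls i x‖) ^ 2 ≤ ‖filtEmbed Ls m α j x‖ ^ 2 := by
    rw [norm_filtEmbed_sq hmono, mul_pow]
    exact Finset.single_le_sum (f := fun i => (α ^ (i - j)) ^ 2 * ‖auxP Ls i x‖ ^ 2)
      (fun k _ => by positivity) hi
  have h2 : 0 ≤ α ^ (i - j) * ‖auxP Ls i x‖ := by positivity
  nlinarith [norm_nonneg (filtEmbed Ls m α j x)]

lemma filtEmbed_zero_of_mem_low (hmono : ∀ a b, a ≤ b → b ≤ m → auxV Ls a ≤ auxV Ls b)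
    {α : ℝ} {j : ℕ} (hj1 : 1 ≤ j) {x : EuclideanSpace ℝ (Fin n)}
    (hx : x ∈ auxV Ls (j - 1)) : filtEmbed Ls m α j x = 0 := by
  rw [filtEmbed_eq]
  refine Finset.sum_eq_zero fun i hi => ?_
  simp only [Finset.mem_Icc] at hi
  rw [auxP_zero_of_mem_low hmono (by omega) (by omega) hx, smul_zero]

end AuxEmbed
section AuxLat
open RealInnerProductSpace

variable {n : ℕ} {L : Submodule ℤ (EuclideanSpace ℝ (Fin n))} {m : ℕ}
  {Ls : ℕ → Submodule ℤ (EuclideanSpace ℝ (Fin n))}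

lemma chain_le (hc : IsPrimitiveChain L m Ls) :
    ∀ a b, a ≤ b → b ≤ m → Ls a ≤ Ls b := by
  intro a b hab hbm
  induction b with
  | zero =>
    have : a = 0 := by omega
    subst this; exact le_rfl
  | succ b ih =>
    rcases Nat.eq_or_lt_of_le hab with rfl | hlt
    · exact le_rfl
    · exact le_trans (ih (by omega) (by omega)) (hc.2.2.1 b (by omega)).le

lemma chain_V_mono (hc : IsPrimitiveChain L m Ls) :
    ∀ a b, a ≤ b → b ≤ m → auxV Ls a ≤ auxV Ls b := by
  intro a b hab hbm
  exact Submodule.span_mono (chain_le hc a b hab hbm)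

lemma Ls_le_L (hc : IsPrimitiveChain L m Ls) {j : ℕ} (hj : j ≤ m) : Ls j ≤ L := by
  have := chain_le hc j m hj le_rfl
  rw [hc.2.1] at this
  exact this

lemma auxV_top (hc : IsPrimitiveChain L m Ls) (hZ : Submodule.span ℝ (L : Set (EuclideanSpace ℝ (Fin n))) = ⊤) :
    auxV Ls m = ⊤ := by
  unfold auxV
  rw [hc.2.1, hZ]

lemma mem_auxV_of_mem_Ls {j : ℕ} {x : EuclideanSpace ℝ (Fin n)} (hx : x ∈ Ls j) :
    x ∈ auxV Ls j := Submodule.subset_span hx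

lemma projPerp_eq_auxP (hc : IsPrimitiveChain L m Ls) {j : ℕ} (hjm : j ≤ m)
    {x : EuclideanSpace ℝ (Fin n)} (hx : x ∈ auxV Ls j) :
    ((orthogonalProjection (Submodule.span ℝ (Ls (j - 1) : Set (EuclideanSpace ℝ (Fin n))))ᗮ) x
      : EuclideanSpace ℝ (Fin n)) = auxP Ls j x := by
  have hle : auxV Ls (j - 1) ≤ auxV Ls j := chain_V_mono hc (j - 1) j (by omega) hjm
  have hd := auxQ_decomp hle x
  rw [auxQ_eq_self hx] at hd
  have : (orthogonalProjection (auxV Ls (j - 1))ᗮ x : EuclideanSpace ℝ (Fin n))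
      = x - auxQ Ls (j - 1) x := Submodule.starProjection_orthogonal_val (K := auxV Ls (j - 1)) x
  calc ((orthogonalProjection (Submodule.span ℝ (Ls (j - 1) : Set (EuclideanSpace ℝ (Fin n))))ᗮ) x
      : EuclideanSpace ℝ (Fin n)) = x - auxQ Ls (j - 1) x := this
    _ = auxP Ls j x := sub_eq_iff_eq_add'.mpr hd

lemma quotLat_eq_image (hc : IsPrimitiveChain L m Ls) {j : ℕ} (hjm : j ≤ m) :
    quotLat Ls j = auxP Ls j '' (Ls j : Set (EuclideanSpace ℝ (Fin n))) := by
  unfold quotLat projPerp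
  apply Set.image_congr
  intro x hx
  exact projPerp_eq_auxP hc hjm (mem_auxV_of_mem_Ls hx)

lemma mem_quotLat (hc : IsPrimitiveChain L m Ls) {j : ℕ} (hjm : j ≤ m)
    {u : EuclideanSpace ℝ (Fin n)} (hu : u ∈ Ls j) : auxP Ls j u ∈ quotLat Ls j := by
  rw [quotLat_eq_image hc hjm]
  exact ⟨u, hu, rfl⟩

lemma lambda1_nonneg (A : Set (EuclideanSpace ℝ (Fin n))) : 0 ≤ lambda1 A := by
  apply Real.sInf_nonneg
  rintro r ⟨z, _, rfl⟩
  exact norm_nonneg z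

lemma lambda1_le_of_mem {A : Set (EuclideanSpace ℝ (Fin n))} {z : EuclideanSpace ℝ (Fin n)}
    (hz : z ∈ A) (h0 : z ≠ 0) : lambda1 A ≤ ‖z‖ := by
  apply csInf_le
  · exact ⟨0, by rintro r ⟨y, _, rfl⟩; exact norm_nonneg y⟩
  · exact ⟨z, ⟨hz, by simp [h0]⟩, rfl⟩

/-- If all blocks of `w ∈ L` above `k` vanish then `w` lies in the `k`-th sublattice. -/
lemma mem_Ls_of_high_blocks_zero (hc : IsPrimitiveChain L m Ls) (htop : auxV Ls m = ⊤)
    {w : EuclideanSpace ℝ (Fin n)} (hw : w ∈ L) {k : ℕ} (hk : k ≤ m)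
    (hz : ∀ i, k < i → i ≤ m → auxP Ls i w = 0) : w ∈ Ls k := by
  have hmono := chain_V_mono hc
  have hsum : ∑ i ∈ Finset.Ioc k m, auxP Ls i w = w - auxQ Ls k w :=
    sum_auxP_Ioc hc.1 htop hmono hk w
  have hzero : ∑ i ∈ Finset.Ioc k m, auxP Ls i w = 0 := by
    refine Finset.sum_eq_zero fun i hi => ?_
    simp only [Finset.mem_Ioc] at hi
    exact hz i hi.1 hi.2
  have hwV : w ∈ auxV Ls k := by
    have : w = auxQ Ls k w := by
      have h2 : w - auxQ Ls k w = 0 := hsum.symm.trans hzero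
      have := sub_eq_zero.1 h2
      exact this
    rw [this]; exact auxQ_mem k w
  have hprim := hc.2.2.2 k hk
  have : w ∈ (L : Set (EuclideanSpace ℝ (Fin n)))
      ∩ (Submodule.span ℝ (Ls k : Set (EuclideanSpace ℝ (Fin n))) :
          Submodule ℝ (EuclideanSpace ℝ (Fin n))) := ⟨hw, hwV⟩
  rw [← hprim] at this
  exact this

end AuxLat
section AuxLam
open RealInnerProductSpace

variable {n : ℕ} {L : Submodule ℤ (EuclideanSpace ℝ (Fin n))} {m : ℕ}
  {Ls : ℕ → Submodule ℤ (EuclideanSpace ℝ (Fin n))} {q γ : ℝ}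

lemma lam_chain (hγ : 0 ≤ γ)
    (hg : ∀ j, 1 ≤ j → j < m → lambda1 (quotLat Ls (j + 1)) ≥ γ * lambda1 (quotLat Ls j)) :
    ∀ a b, 1 ≤ a → a ≤ b → b ≤ m →
      γ ^ (b - a) * lambda1 (quotLat Ls a) ≤ lambda1 (quotLat Ls b) := by
  intro a b ha hab hbm
  induction b with
  | zero =>
    have : a = 0 := by omega
    omega
  | succ b ih =>
    rcases Nat.eq_or_lt_of_le hab with rfl | hlt
    · simp
    · have hab' : a ≤ b := by omega
      have ih' := ih hab' (by omega)
      have hstep := hg b (by omega) (by omega)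
      have hpow : γ ^ (b + 1 - a) = γ * γ ^ (b - a) := by
        have : b + 1 - a = (b - a) + 1 := by omega
        rw [this, pow_succ]; ring
      rw [hpow]
      calc γ * γ ^ (b - a) * lambda1 (quotLat Ls a)
          = γ * (γ ^ (b - a) * lambda1 (quotLat Ls a)) := by ring
        _ ≤ γ * lambda1 (quotLat Ls b) := by
            exact mul_le_mul_of_nonneg_left ih' hγ
        _ ≤ lambda1 (quotLat Ls (b + 1)) := hstep

lemma lam_mono (hγ : 2 ≤ γ)
    (hg : ∀ j, 1 ≤ j → j < m → lambda1 (quotLat Ls (j + 1)) ≥ γ * lambda1 (quotLat Ls j))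
    {a b : ℕ} (ha : 1 ≤ a) (hab : a ≤ b) (hbm : b ≤ m) :
    lambda1 (quotLat Ls a) ≤ lambda1 (quotLat Ls b) := by
  have h := lam_chain (by linarith) hg a b ha hab hbm
  have h1 : (1 : ℝ) ≤ γ ^ (b - a) := one_le_pow₀ (by linarith)
  nlinarith [lambda1_nonneg (quotLat Ls a)]

lemma filtEmbed_map_zero (α : ℝ) (j : ℕ) : filtEmbed Ls m α j (0 : EuclideanSpace ℝ (Fin n)) = 0 := by
  rw [filtEmbed_eq]
  refine Finset.sum_eq_zero fun i _ => ?_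
  have : auxP Ls i (0 : EuclideanSpace ℝ (Fin n)) = 0 := by
    unfold auxP; rw [map_zero]; rfl
  rw [this, smul_zero]

/-- A vector of `Ls j` not in `Ls (j-1)` has a nonzero `j`-th block. -/
lemma auxP_ne_zero_of_not_mem (hc : IsPrimitiveChain L m Ls) {j : ℕ} (hj1 : 1 ≤ j) (hjm : j ≤ m)
    {u : EuclideanSpace ℝ (Fin n)} (hu : u ∈ Ls j) (hu' : u ∉ Ls (j - 1)) :
    auxP Ls j u ≠ 0 := by
  intro h0
  apply hu'
  have hle : auxV Ls (j - 1) ≤ auxV Ls j := chain_V_mono hc (j - 1) j (by omega) hjm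
  have hd := auxQ_decomp hle u
  rw [auxQ_eq_self (mem_auxV_of_mem_Ls hu), h0, add_zero] at hd
  have huV : u ∈ auxV Ls (j - 1) := by rw [hd]; exact auxQ_mem _ u
  have hprim := hc.2.2.2 (j - 1) (by omega)
  have : u ∈ (L : Set (EuclideanSpace ℝ (Fin n)))
      ∩ (Submodule.span ℝ (Ls (j - 1) : Set (EuclideanSpace ℝ (Fin n))) :
          Submodule ℝ (EuclideanSpace ℝ (Fin n))) := ⟨Ls_le_L hc hjm hu, huV⟩
  rw [← hprim] at this
  exact this

lemma exists_filtEmbed_ne_zero (hc : IsPrimitiveChain L m Ls) {α : ℝ} {j : ℕ}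
    (hj1 : 1 ≤ j) (hjm : j ≤ m) :
    ∃ u ∈ L, filtEmbed Ls m α j u = auxP Ls j u ∧ auxP Ls j u ≠ 0 := by
  have hmono := chain_V_mono hc
  have hlt : Ls (j - 1) < Ls j := by
    have := hc.2.2.1 (j - 1) (by omega)
    have hj : j - 1 + 1 = j := by omega
    rwa [hj] at this
  obtain ⟨u, hu, hu'⟩ := SetLike.exists_of_lt hlt
  refine ⟨u, Ls_le_L hc hjm hu, ?_, auxP_ne_zero_of_not_mem hc hj1 hjm hu hu'⟩
  rw [filtEmbed_eq]
  rw [Finset.sum_eq_single j]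
  · simp
  · intro i hi hij
    have hi' := Finset.mem_Icc.1 hi
    have : auxP Ls i u = 0 :=
      auxP_zero_of_mem_low hmono (k := j) (by omega) (by omega) (mem_auxV_of_mem_Ls hu)
    rw [this, smul_zero]
  · intro h
    exact absurd (Finset.mem_Icc.2 ⟨le_rfl, hjm⟩) h

/-- The first minimum of the embedded lattice is at least that of the `j`-th quotient. -/
lemma lam_le_lambda1_filtEmbed (hc : IsPrimitiveChain L m Ls)
    (htop : auxV Ls m = ⊤) (hγ : 2 ≤ γ)
    (hg : ∀ j, 1 ≤ j → j < m → lambda1 (quotLat Ls (j + 1)) ≥ γ * lambda1 (quotLat Ls j))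
    {α : ℝ} (hα : 1 / 2 ≤ α) {j : ℕ} (hj1 : 1 ≤ j) (hjm : j ≤ m) :
    lambda1 (quotLat Ls j)
      ≤ lambda1 (filtEmbed Ls m α j '' (L : Set (EuclideanSpace ℝ (Fin n)))) := by
  have hmono := chain_V_mono hc
  have hα0 : (0 : ℝ) ≤ α := by linarith
  classical
  -- nonemptiness
  obtain ⟨u, huL, hEu, hPu⟩ := exists_filtEmbed_ne_zero hc (α := α) hj1 hjm
  apply le_csInf
  · exact ⟨‖filtEmbed Ls m α j u‖, ⟨filtEmbed Ls m α j u,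
      ⟨⟨u, huL, rfl⟩, by rw [hEu]; simpa using hPu⟩, rfl⟩⟩
  · rintro r ⟨z, ⟨⟨w, hwL, rfl⟩, hz0⟩, rfl⟩
    have hEw : filtEmbed Ls m α j w ≠ 0 := by simpa using hz0
    -- the top nonzero block of w
    set s := (Finset.Ioc 0 m).filter (fun i => auxP Ls i w ≠ 0) with hs
    have hsne : s.Nonempty := by
      by_contra hse
      apply hEw
      rw [filtEmbed_eq]
      refine Finset.sum_eq_zero fun i hi => ?_
      have hi' := Finset.mem_Icc.1 hi
      have : auxP Ls i w = 0 := by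
        by_contra hne
        exact hse ⟨i, Finset.mem_filter.2 ⟨Finset.mem_Ioc.2 ⟨by omega, hi'.2⟩, hne⟩⟩
      rw [this, smul_zero]
    set t := s.max' hsne with ht
    have hts : t ∈ s := s.max'_mem hsne
    have htIoc := (Finset.mem_filter.1 hts).1
    have ht1 : 1 ≤ t := (Finset.mem_Ioc.1 htIoc).1
    have htm : t ≤ m := (Finset.mem_Ioc.1 htIoc).2
    have hPt : auxP Ls t w ≠ 0 := (Finset.mem_filter.1 hts).2
    have hhigh : ∀ i, t < i → i ≤ m → auxP Ls i w = 0 := by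
      intro i hti him
      by_contra hne
      have his : i ∈ s := Finset.mem_filter.2 ⟨Finset.mem_Ioc.2 ⟨by omega, him⟩, hne⟩
      exact absurd (s.le_max' i his) (by omega)
    have htj : j ≤ t := by
      by_contra htj
      apply hEw
      rw [filtEmbed_eq]
      refine Finset.sum_eq_zero fun i hi => ?_
      have hi' := Finset.mem_Icc.1 hi
      rw [hhigh i (by omega) hi'.2, smul_zero]
    have hwt : w ∈ Ls t := mem_Ls_of_high_blocks_zero hc htop hwL htm hhigh
    have hlam_t : lambda1 (quotLat Ls t) ≤ ‖auxP Ls t w‖ :=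
      lambda1_le_of_mem (mem_quotLat hc htm hwt) hPt
    have hchain : γ ^ (t - j) * lambda1 (quotLat Ls j) ≤ lambda1 (quotLat Ls t) :=
      lam_chain (by linarith) hg j t hj1 htj htm
    have hblock : α ^ (t - j) * ‖auxP Ls t w‖ ≤ ‖filtEmbed Ls m α j w‖ :=
      block_le_norm_filtEmbed hmono hα0 (Finset.mem_Icc.2 ⟨htj, htm⟩) w
    have hαγ : (1 : ℝ) ≤ α * γ := by nlinarith
    have h1 : (1 : ℝ) ≤ (α * γ) ^ (t - j) := one_le_pow₀ hαγ
    have hlam0 : 0 ≤ lambda1 (quotLat Ls j) := lambda1_nonneg _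
    calc lambda1 (quotLat Ls j) ≤ (α * γ) ^ (t - j) * lambda1 (quotLat Ls j) := by nlinarith
      _ = α ^ (t - j) * (γ ^ (t - j) * lambda1 (quotLat Ls j)) := by rw [mul_pow]; ring
      _ ≤ α ^ (t - j) * lambda1 (quotLat Ls t) := by
          apply mul_le_mul_of_nonneg_left hchain (by positivity)
      _ ≤ α ^ (t - j) * ‖auxP Ls t w‖ := by
          apply mul_le_mul_of_nonneg_left hlam_t (by positivity)
      _ ≤ ‖filtEmbed Ls m α j w‖ := hblock

end AuxLam
section AuxCov
open RealInnerProductSpace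

variable {n : ℕ} {L : Submodule ℤ (EuclideanSpace ℝ (Fin n))} {m : ℕ}
  {Ls : ℕ → Submodule ℤ (EuclideanSpace ℝ (Fin n))} {q γ : ℝ}

/-- For any lattice (as a `ℤ`-submodule), the distance function to it is bounded on its span. -/
lemma bddAbove_infDist_span (M : Submodule ℤ (EuclideanSpace ℝ (Fin n))) :
    BddAbove ((fun x => Metric.infDist x (M : Set (EuclideanSpace ℝ (Fin n)))) ''
      ((Submodule.span ℝ (M : Set (EuclideanSpace ℝ (Fin n))) :
        Submodule ℝ (EuclideanSpace ℝ (Fin n))) : Set (EuclideanSpace ℝ (Fin n)))) := by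
  classical
  obtain ⟨b, hbsub, hbspan, hbli⟩ :=
    exists_linearIndependent ℝ (M : Set (EuclideanSpace ℝ (Fin n)))
  have hbfin : b.Finite := hbli.setFinite
  refine ⟨∑ i ∈ hbfin.toFinset, ‖i‖, ?_⟩
  rintro r ⟨y, hy, rfl⟩
  have hy' : y ∈ Submodule.span ℝ ((hbfin.toFinset : Finset (EuclideanSpace ℝ (Fin n))) :
      Set (EuclideanSpace ℝ (Fin n))) := by
    rw [hbfin.coe_toFinset, hbspan]; exact hy
  obtain ⟨f, hf⟩ := mem_span_finset.1 hy'
  set z := ∑ i ∈ hbfin.toFinset, (⌊f i⌋ : ℝ) • i with hz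
  have hzM : z ∈ M := by
    apply Submodule.sum_mem
    intro i hi
    have him : i ∈ M := hbsub (hbfin.mem_toFinset.1 hi)
    have hcast : (⌊f i⌋ : ℝ) • i = (⌊f i⌋ : ℤ) • i := by
      rw [Int.cast_smul_eq_zsmul]
    rw [hcast]
    exact Submodule.smul_mem M _ him
  have hdist : dist y z ≤ ∑ i ∈ hbfin.toFinset, ‖i‖ := by
    rw [dist_eq_norm]
    have hyz : y - z = ∑ i ∈ hbfin.toFinset, (f i - ⌊f i⌋) • i := by
      rw [← hf.2, hz, ← Finset.sum_sub_distrib]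
      refine Finset.sum_congr rfl fun i _ => ?_
      rw [sub_smul]
    rw [hyz]
    calc ‖∑ i ∈ hbfin.toFinset, (f i - ⌊f i⌋) • i‖
        ≤ ∑ i ∈ hbfin.toFinset, ‖(f i - ⌊f i⌋) • i‖ := norm_sum_le _ _
      _ ≤ ∑ i ∈ hbfin.toFinset, ‖i‖ := by
          refine Finset.sum_le_sum fun i _ => ?_
          rw [norm_smul, Real.norm_eq_abs]
          have h0 : (0 : ℝ) ≤ f i - ⌊f i⌋ := by linarith [Int.floor_le (f i)]
          have h1 : f i - ⌊f i⌋ < 1 := by linarith [Int.lt_floor_add_one (f i)]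
          rw [abs_of_nonneg h0]
          nlinarith [norm_nonneg i]
  exact le_trans (Metric.infDist_le_dist_of_mem hzM) hdist

/-- The projection onto the orthogonal complement of `auxV Ls (j-1)`, as a `ℤ`-linear map. -/
def quotMap (Ls : ℕ → Submodule ℤ (EuclideanSpace ℝ (Fin n))) (j : ℕ) :
    EuclideanSpace ℝ (Fin n) →ₗ[ℤ] EuclideanSpace ℝ (Fin n) :=
  (((auxV Ls (j - 1))ᗮ.subtype.comp
    (orthogonalProjection (auxV Ls (j - 1))ᗮ).toLinearMap).restrictScalars ℤ)

lemma quotLat_eq_submodule (j : ℕ) :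
    quotLat Ls j = (((Ls j).map (quotMap Ls j) : Submodule ℤ (EuclideanSpace ℝ (Fin n))) :
      Set (EuclideanSpace ℝ (Fin n))) := by
  unfold quotLat projPerp quotMap auxV
  rw [Submodule.map_coe]
  rfl

lemma bddAbove_quot (j : ℕ) :
    BddAbove ((fun x => Metric.infDist x (quotLat Ls j)) ''
      ((Submodule.span ℝ (quotLat Ls j) : Submodule ℝ (EuclideanSpace ℝ (Fin n))) :
        Set (EuclideanSpace ℝ (Fin n)))) := by
  rw [quotLat_eq_submodule]
  exact bddAbove_infDist_span _

lemma auxP_mem_span_quotLat (hc : IsPrimitiveChain L m Ls) {j : ℕ} (hjm : j ≤ m)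
    {x : EuclideanSpace ℝ (Fin n)} (hx : x ∈ auxV Ls j) :
    auxP Ls j x ∈ Submodule.span ℝ (quotLat Ls j) := by
  set g : EuclideanSpace ℝ (Fin n) →ₗ[ℝ] EuclideanSpace ℝ (Fin n) :=
    ((auxV Ls (j - 1))ᗮ.subtype.comp
      (orthogonalProjection (auxV Ls (j - 1))ᗮ).toLinearMap) with hg
  have himg : quotLat Ls j = g '' (Ls j : Set (EuclideanSpace ℝ (Fin n))) := rfl
  rw [himg, Submodule.span_image]
  exact ⟨x, hx, projPerp_eq_auxP hc hjm hx⟩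

lemma quotLat_nonempty (j : ℕ) : (quotLat Ls j).Nonempty := by
  refine ⟨0, 0, Submodule.zero_mem _, ?_⟩
  simp

/-- The iterated covering bound: any point of `auxV Ls k` is within
`sqrt(Σ_{j≤k} (q λ_j / 2)^2 + β)` of the sublattice `Ls k`. -/
lemma covering_bound (hc : IsPrimitiveChain L m Ls)
    (hcov : ∀ j, 1 ≤ j → j ≤ m → covRad (quotLat Ls j) ≤ q * lambda1 (quotLat Ls j) / 2)
    (hq : 0 < q) :
    ∀ k, k ≤ m → ∀ x ∈ auxV Ls k, ∀ β > (0 : ℝ), ∃ u ∈ Ls k,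
      ‖x - u‖ ^ 2 ≤ (∑ j ∈ Finset.Ioc 0 k, (q * lambda1 (quotLat Ls j) / 2) ^ 2) + β := by
  intro k
  induction k with
  | zero =>
    intro _ x hx β hβ
    have hx0 : x = 0 := by
      rw [auxV_zero hc.1, Submodule.mem_bot] at hx
      exact hx
    exact ⟨0, Submodule.zero_mem _, by simp [hx0]; positivity⟩
  | succ k ih =>
    intro hk1 x hx β hβ
    have hmono := chain_V_mono hc
    set a := q * lambda1 (quotLat Ls (k + 1)) / 2 with ha
    have ha0 : 0 ≤ a := by
      have := lambda1_nonneg (quotLat Ls (k + 1))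
      positivity
    -- covering at the top block
    have hyspan : auxP Ls (k + 1) x ∈ Submodule.span ℝ (quotLat Ls (k + 1)) :=
      auxP_mem_span_quotLat hc hk1 hx
    have hcovle : Metric.infDist (auxP Ls (k + 1) x) (quotLat Ls (k + 1)) ≤ a := by
      have h1 : Metric.infDist (auxP Ls (k + 1) x) (quotLat Ls (k + 1))
          ≤ covRad (quotLat Ls (k + 1)) :=
        le_csSup (bddAbove_quot (k + 1)) ⟨auxP Ls (k + 1) x, hyspan, rfl⟩
      exact le_trans h1 (hcov (k + 1) (by omega) hk1)
    set β' := min 1 (β / 2 / (2 * a + 1)) with hβ'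
    have hβ'0 : 0 < β' := by
      apply lt_min one_pos
      positivity
    have hltt : Metric.infDist (auxP Ls (k + 1) x) (quotLat Ls (k + 1)) < a + β' := by
      linarith
    obtain ⟨p, hp, hdp⟩ := (Metric.infDist_lt_iff (quotLat_nonempty (k + 1))).1 hltt
    rw [quotLat_eq_image hc hk1] at hp
    obtain ⟨u', hu', hpu⟩ := hp
    -- recurse on the low part
    have hxu' : x - u' ∈ auxV Ls (k + 1) :=
      Submodule.sub_mem _ hx (mem_auxV_of_mem_Ls hu')
    have hlow : auxQ Ls k (x - u') ∈ auxV Ls k := auxQ_mem k (x - u')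
    obtain ⟨c, hc', hcbound⟩ := ih (by omega) _ hlow (β / 2) (by linarith)
    refine ⟨u' + c, Submodule.add_mem _ hu' (chain_le hc k (k + 1) (by omega) hk1 hc'), ?_⟩
    -- orthogonal decomposition
    set z := x - u' with hzdef
    have hdec : z = auxQ Ls k z + auxP Ls (k + 1) z := by
      have hle : auxV Ls ((k + 1) - 1) ≤ auxV Ls (k + 1) := by
        simpa using hmono k (k + 1) (by omega) hk1
      have := auxQ_decomp hle z
      rw [auxQ_eq_self hxu'] at this
      simpa using this
    have hsplit : x - (u' + c) = (auxQ Ls k z - c) + auxP Ls (k + 1) z := by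
      have : x - (u' + c) = z - c := by rw [hzdef]; abel
      rw [this]
      nth_rewrite 1 [hdec]
      abel
    have horth : ⟪auxQ Ls k z - c, auxP Ls (k + 1) z⟫ = 0 := by
      apply inner_auxV_block_eq_zero hmono (k := k) (i := k + 1) (by omega) (by simpa using (by omega : k ≤ m))
      · exact Submodule.sub_mem _ (auxQ_mem k z) (mem_auxV_of_mem_Ls hc')
      · exact auxP_mem (k + 1) z
    have hpyth : ‖x - (u' + c)‖ ^ 2 = ‖auxQ Ls k z - c‖ ^ 2 + ‖auxP Ls (k + 1) z‖ ^ 2 := by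
      rw [hsplit, norm_add_sq_real, horth]
      ring
    -- bound the top block
    have htop_bound : ‖auxP Ls (k + 1) z‖ < a + β' := by
      have : auxP Ls (k + 1) z = auxP Ls (k + 1) x - p := by
        rw [hzdef, auxP_sub, hpu]
      rw [this, ← dist_eq_norm]
      exact hdp
    have htop_sq : ‖auxP Ls (k + 1) z‖ ^ 2 ≤ a ^ 2 + β / 2 := by
      have h1 : ‖auxP Ls (k + 1) z‖ ^ 2 ≤ (a + β') ^ 2 := by
        nlinarith [norm_nonneg (auxP Ls (k + 1) z)]
      have h2 : (a + β') ^ 2 ≤ a ^ 2 + β / 2 := by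
        have hb1 : β' ≤ 1 := min_le_left _ _
        have hb2 : β' ≤ β / 2 / (2 * a + 1) := min_le_right _ _
        have hb3 : β' * (2 * a + 1) ≤ β / 2 :=
          (le_div_iff₀ (by positivity)).1 hb2
        nlinarith
      linarith
    -- assemble
    rw [Finset.sum_Ioc_succ_top (Nat.zero_le k)]
    rw [hpyth]
    have : ‖auxQ Ls k z - c‖ ^ 2
        ≤ (∑ j ∈ Finset.Ioc 0 k, (q * lambda1 (quotLat Ls j) / 2) ^ 2) + β / 2 := hcbound
    calc ‖auxQ Ls k z - c‖ ^ 2 + ‖auxP Ls (k + 1) z‖ ^ 2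
        ≤ ((∑ j ∈ Finset.Ioc 0 k, (q * lambda1 (quotLat Ls j) / 2) ^ 2) + β / 2)
          + (a ^ 2 + β / 2) := by linarith
      _ = (∑ j ∈ Finset.Ioc 0 k, (q * lambda1 (quotLat Ls j) / 2) ^ 2)
          + (q * lambda1 (quotLat Ls (k + 1)) / 2) ^ 2 + β := by rw [ha]; ring

/-- Geometric-sum bound for the covering radii. -/
lemma sum_lam_sq_le (hγ : 2 ≤ γ) (hq : 0 ≤ q)
    (hg : ∀ j, 1 ≤ j → j < m → lambda1 (quotLat Ls (j + 1)) ≥ γ * lambda1 (quotLat Ls j)) :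
    ∀ k, 1 ≤ k → k ≤ m →
      (∑ j ∈ Finset.Ioc 0 k, (q * lambda1 (quotLat Ls j) / 2) ^ 2)
        ≤ (q * lambda1 (quotLat Ls k)) ^ 2 / 3 := by
  intro k
  induction k with
  | zero => omega
  | succ k ih =>
    intro _ hk1
    rcases Nat.eq_or_lt_of_le (by omega : 1 ≤ k + 1) with h1 | h1
    · rw [← h1]
      norm_num
      nlinarith [sq_nonneg (q * lambda1 (quotLat Ls 1))]
    · have hk : 1 ≤ k := by omega
      have ihk := ih hk (by omega)
      have hstep := hg k hk (by omega)
      have hlam0 : 0 ≤ lambda1 (quotLat Ls k) := lambda1_nonneg _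
      have hdouble : 2 * lambda1 (quotLat Ls k) ≤ lambda1 (quotLat Ls (k + 1)) := by
        nlinarith
      have hql : 0 ≤ q * lambda1 (quotLat Ls k) := mul_nonneg hq hlam0
      have h4 : 2 * (q * lambda1 (quotLat Ls k)) ≤ q * lambda1 (quotLat Ls (k + 1)) := by
        nlinarith
      have h5 : (q * lambda1 (quotLat Ls k)) ^ 2
          ≤ (q * lambda1 (quotLat Ls (k + 1))) ^ 2 / 4 := by nlinarith
      rw [Finset.sum_Ioc_succ_top (Nat.zero_le k)]
      have h6 : (q * lambda1 (quotLat Ls (k + 1)) / 2) ^ 2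
          = (q * lambda1 (quotLat Ls (k + 1))) ^ 2 / 4 := by ring
      linarith

end AuxCov
section AuxMain
open RealInnerProductSpace

variable {n : ℕ} {L : Submodule ℤ (EuclideanSpace ℝ (Fin n))} {m : ℕ}
  {Ls : ℕ → Submodule ℤ (EuclideanSpace ℝ (Fin n))} {q γ : ℝ}

lemma infDist_sub_of_mem {S : Set (EuclideanSpace ℝ (Fin n))}
    (hsub : ∀ a ∈ S, ∀ b ∈ S, a - b ∈ S) {b : EuclideanSpace ℝ (Fin n)} (hb : b ∈ S)
    (a : EuclideanSpace ℝ (Fin n)) :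
    Metric.infDist (a - b) S = Metric.infDist a S := by
  have h0 : (0 : EuclideanSpace ℝ (Fin n)) ∈ S := by simpa using hsub b hb b hb
  have hnb : (0 : EuclideanSpace ℝ (Fin n)) - b ∈ S := hsub 0 h0 b hb
  have himg : (fun s => s - b) '' S = S := by
    apply Set.Subset.antisymm
    · rintro _ ⟨s, hs, rfl⟩
      exact hsub s hs b hb
    · intro s hs
      refine ⟨s + b, ?_, by simp⟩
      have : s - (0 - b) ∈ S := hsub s hs _ hnb
      simpa using this
  have hiso : Isometry (fun s : EuclideanSpace ℝ (Fin n) => s - b) :=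
    Isometry.of_dist_eq (fun x y => dist_sub_right x y b)
  calc Metric.infDist (a - b) S
      = Metric.infDist ((fun s => s - b) a) ((fun s => s - b) '' S) := by rw [himg]
    _ = Metric.infDist a S := Metric.infDist_image hiso

lemma exists_closest (L : Submodule ℤ (EuclideanSpace ℝ (Fin n))) [DiscreteTopology L]
    (v : EuclideanSpace ℝ (Fin n)) :
    ∃ w ∈ L, dist v w = Metric.infDist v (L : Set (EuclideanSpace ℝ (Fin n))) := by
  haveI : DiscreteTopology L.toAddSubgroup := ‹DiscreteTopology L›
  have hclosed : IsClosed (L : Set (EuclideanSpace ℝ (Fin n))) :=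
    AddSubgroup.isClosed_of_discrete (H := L.toAddSubgroup)
  obtain ⟨w, hw, hdist⟩ := hclosed.exists_infDist_eq_dist ⟨0, Submodule.zero_mem L⟩ v
  exact ⟨w, hw, hdist.symm⟩

set_option maxHeartbeats 1000000 in
/-- Key structural lemma: if `w ∈ L` approximates `v` well in the `j`-th embedding, with
`‖v‖ ≤ d` and `d ≤ q·λ_J`, then `w` lies in a low sublattice. -/
lemma wj_mem_Ls (hc : IsPrimitiveChain L m Ls) (htop : auxV Ls m = ⊤)
    (hγ : 2 ≤ γ) (hq : 1 ≤ q) (hqγ : q ≤ γ ^ 2 / 32)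
    (hg : ∀ j, 1 ≤ j → j < m → lambda1 (quotLat Ls (j + 1)) ≥ γ * lambda1 (quotLat Ls j))
    {α : ℝ} (hα : 1 / 2 ≤ α) {d : ℝ} (hd0 : 0 < d)
    {J j : ℕ} (hJ1 : 1 ≤ J) (hJj : J ≤ j) (hjm : j ≤ m)
    (hdJ : d ≤ q * lambda1 (quotLat Ls J))
    {v w : EuclideanSpace ℝ (Fin n)} (hvd : ‖v‖ ≤ d) (hwL : w ∈ L)
    (hη : ‖filtEmbed Ls m α j (v - w)‖ ≤ (1 / 10) * d) :
    w ∈ Ls (min (max j (J + 2) - 1) m) := by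
  classical
  have hmono := chain_V_mono hc
  have hα0 : (0 : ℝ) ≤ α := by linarith
  have hq0 : (0 : ℝ) < q := by linarith
  set K := min (max j (J + 2) - 1) m with hK
  have hKm : K ≤ m := min_le_right _ _
  set s := (Finset.Ioc 0 m).filter (fun i => auxP Ls i w ≠ 0) with hs
  by_cases hse : s.Nonempty
  swap
  · -- all blocks vanish, so w = 0
    have hw0 : w = 0 := by
      have hsum := sum_auxP_Ioc hc.1 htop hmono (Nat.zero_le m) w
      have hzero : ∑ i ∈ Finset.Ioc 0 m, auxP Ls i w = 0 := by
        refine Finset.sum_eq_zero fun i hi => ?_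
        by_contra hne
        exact hse ⟨i, Finset.mem_filter.2 ⟨hi, hne⟩⟩
      rw [hzero, auxQ_zero hc.1] at hsum
      simpa using hsum.symm
    rw [hw0]; exact Submodule.zero_mem _
  · set t := s.max' hse with ht
    have hts : t ∈ s := s.max'_mem hse
    have htIoc := (Finset.mem_filter.1 hts).1
    have ht1 : 1 ≤ t := (Finset.mem_Ioc.1 htIoc).1
    have htm : t ≤ m := (Finset.mem_Ioc.1 htIoc).2
    have hPt : auxP Ls t w ≠ 0 := (Finset.mem_filter.1 hts).2
    have hhigh : ∀ i, t < i → i ≤ m → auxP Ls i w = 0 := by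
      intro i hti him
      by_contra hne
      have his : i ∈ s := Finset.mem_filter.2 ⟨Finset.mem_Ioc.2 ⟨by omega, him⟩, hne⟩
      exact absurd (s.le_max' i his) (by omega)
    by_cases htK : t ≤ K
    · exact mem_Ls_of_high_blocks_zero hc htop hwL hKm
        (fun i hi him => hhigh i (by omega) him)
    · -- t > K: derive a contradiction
      exfalso
      push_neg at htK
      have hKlt : K < m := lt_of_lt_of_le htK htm
      have hKeq : K = max j (J + 2) - 1 := by
        rw [hK]
        omega
      have htj : j ≤ t := by omega
      have htJ2 : J + 2 ≤ t := by omega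
      -- w ∈ Ls t with nonzero top block
      have hwt : w ∈ Ls t := mem_Ls_of_high_blocks_zero hc htop hwL htm hhigh
      have hlam_t : lambda1 (quotLat Ls t) ≤ ‖auxP Ls t w‖ :=
        lambda1_le_of_mem (mem_quotLat hc htm hwt) hPt
      -- lower bound on λ_t
      have hchain : γ ^ (t - J) * lambda1 (quotLat Ls J) ≤ lambda1 (quotLat Ls t) :=
        lam_chain (by linarith) hg J t hJ1 (by omega) htm
      have hγ2 : 32 * q ≤ γ ^ 2 := by linarith [(div_le_iff₀ (by norm_num : (0:ℝ) < 32)).1 (le_refl (γ^2/32))]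
      have hγ2' : (32 : ℝ) * q ≤ γ ^ 2 := by nlinarith
      have hpow_split : γ ^ (t - J) = γ ^ 2 * γ ^ (t - J - 2) := by
        rw [← pow_add]
        congr 1
        omega
      have h2γ : (2 : ℝ) ^ (t - J - 2) ≤ γ ^ (t - J - 2) :=
        pow_le_pow_left₀ (by norm_num) hγ _
      have h2pos : (0 : ℝ) < 2 ^ (t - J - 2) := by positivity
      have hlamJ : d / q ≤ lambda1 (quotLat Ls J) := by
        rw [div_le_iff₀ hq0]
        nlinarith
      have hγt : 8 * q * 2 ^ (t - J) ≤ γ ^ (t - J) := by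
        rw [hpow_split]
        have h4 : (2 : ℝ) ^ (t - J) = 4 * 2 ^ (t - J - 2) := by
          rw [show t - J = 2 + (t - J - 2) by omega, pow_add]
          norm_num
        rw [h4]
        nlinarith
      have hXJ : (2:ℝ) ^ (t - j) ≤ 2 ^ (t - J) := by
        apply pow_le_pow_right₀ (by norm_num)
        omega
      have hlamJ0 : 0 ≤ lambda1 (quotLat Ls J) := lambda1_nonneg _
      have hlow : 8 * 2 ^ (t - j) * d ≤ lambda1 (quotLat Ls t) := by
        have h5 : 8 * q * 2 ^ (t - J) * (d / q) ≤ γ ^ (t - J) * lambda1 (quotLat Ls J) := by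
          apply mul_le_mul hγt hlamJ (by positivity) (by positivity)
        have h6 : 8 * q * 2 ^ (t - J) * (d / q) = 8 * 2 ^ (t - J) * d := by
          field_simp
        rw [h6] at h5
        have h7 : 8 * 2 ^ (t - j) * d ≤ 8 * 2 ^ (t - J) * d := by
          have := mul_le_mul_of_nonneg_right hXJ hd0.le
          linarith
        linarith
      -- upper bound on λ_t
      have hblock : α ^ (t - j) * ‖auxP Ls t (v - w)‖ ≤ ‖filtEmbed Ls m α j (v - w)‖ :=
        block_le_norm_filtEmbed hmono hα0 (Finset.mem_Icc.2 ⟨htj, htm⟩) (v - w)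
      have hone : (1 : ℝ) ≤ α ^ (t - j) * 2 ^ (t - j) := by
        have : (1 : ℝ) ≤ (α * 2) ^ (t - j) := one_le_pow₀ (by linarith)
        rwa [mul_pow] at this
      set A := ‖auxP Ls t (v - w)‖ with hA
      have hA0 : 0 ≤ A := norm_nonneg _
      have hAle : A ≤ 2 ^ (t - j) * ((1 / 10) * d) := by
        have hA1 : A ≤ (α ^ (t - j) * 2 ^ (t - j)) * A := by nlinarith
        have hA3 : (2:ℝ) ^ (t - j) * (α ^ (t - j) * A) ≤ 2 ^ (t - j) * ((1 / 10) * d) := by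
          apply mul_le_mul_of_nonneg_left _ (by positivity)
          exact le_trans hblock hη
        nlinarith
      have hPtv : ‖auxP Ls t v‖ ≤ d := le_trans (norm_auxP_le t v) hvd
      have hPw_le : ‖auxP Ls t w‖ ≤ d + 2 ^ (t - j) * ((1 / 10) * d) := by
        have : auxP Ls t w = auxP Ls t v - auxP Ls t (v - w) := by
          rw [auxP_sub]; abel
        rw [this]
        calc ‖auxP Ls t v - auxP Ls t (v - w)‖ ≤ ‖auxP Ls t v‖ + ‖auxP Ls t (v - w)‖ :=
              norm_sub_le _ _
          _ ≤ d + 2 ^ (t - j) * ((1 / 10) * d) := add_le_add hPtv hAle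
      -- contradiction
      have hX1 : (1 : ℝ) ≤ 2 ^ (t - j) := one_le_pow₀ (by norm_num)
      nlinarith [hlam_t, hlow, hPw_le, hX1, hd0]

end AuxMain
section AuxCore
open RealInnerProductSpace

variable {n : ℕ} {L : Submodule ℤ (EuclideanSpace ℝ (Fin n))} {m : ℕ}
  {Ls : ℕ → Submodule ℤ (EuclideanSpace ℝ (Fin n))} {q γ : ℝ}

set_option maxHeartbeats 2000000 in
/-- The core contraction estimate, for a reduced vector `v` (whose distance to the lattice is
its own norm), summed over the window `[J, m]` where `J` is minimal with `d ≤ q λ_J`. -/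
lemma main_core (hc : IsPrimitiveChain L m Ls) (htop : auxV Ls m = ⊤)
    (hγ : 2 ≤ γ) (hq : 1 ≤ q) (hqγ : q ≤ γ ^ 2 / 32)
    (hcov : ∀ j, 1 ≤ j → j ≤ m → covRad (quotLat Ls j) ≤ q * lambda1 (quotLat Ls j) / 2)
    (hg : ∀ j, 1 ≤ j → j < m → lambda1 (quotLat Ls (j + 1)) ≥ γ * lambda1 (quotLat Ls j))
    {α : ℝ} (hα : 1 / 2 ≤ α)
    {v : EuclideanSpace ℝ (Fin n)}
    (hv : Metric.infDist v (L : Set (EuclideanSpace ℝ (Fin n))) = ‖v‖) (hd0 : 0 < ‖v‖)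
    {J : ℕ} (hJ1 : 1 ≤ J) (hJm : J ≤ m)
    (hdJ : ‖v‖ ≤ q * lambda1 (quotLat Ls J))
    (hJmin : ∀ jj, 1 ≤ jj → jj < J → q * lambda1 (quotLat Ls jj) < ‖v‖) :
    (1 / 100 : ℝ) * ‖v‖ ^ 2 ≤ ∑ j ∈ Finset.Icc J m,
      (min (Metric.infDist (filtEmbed Ls m α j v)
          (filtEmbed Ls m α j '' (L : Set (EuclideanSpace ℝ (Fin n)))))
        (q ^ 2 * lambda1 (filtEmbed Ls m α j '' (L : Set (EuclideanSpace ℝ (Fin n)))))) ^ 2 := by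
  classical
  have hmono := chain_V_mono hc
  have hbot := hc.1
  have hα0 : (0 : ℝ) ≤ α := by linarith
  have hq0 : (0 : ℝ) < q := by linarith
  set d := ‖v‖ with hdd
  set D := fun j => Metric.infDist (filtEmbed Ls m α j v)
    (filtEmbed Ls m α j '' (L : Set (EuclideanSpace ℝ (Fin n)))) with hD
  set cap := fun j => q ^ 2 * lambda1 (filtEmbed Ls m α j '' (L : Set (EuclideanSpace ℝ (Fin n))))
    with hcap
  by_contra hS
  push_neg at hS
  -- `hS : Σ < (1/100) d²`
  have hDnn : ∀ j, 0 ≤ D j := fun j => Metric.infDist_nonneg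
  have hcapd : ∀ j, J ≤ j → j ≤ m → d ≤ cap j := by
    intro j hJj hjm
    have h1 : lambda1 (quotLat Ls J) ≤ lambda1 (quotLat Ls j) := lam_mono hγ hg hJ1 hJj hjm
    have h2 : lambda1 (quotLat Ls j)
        ≤ lambda1 (filtEmbed Ls m α j '' (L : Set (EuclideanSpace ℝ (Fin n)))) :=
      lam_le_lambda1_filtEmbed hc htop hγ hg hα (by omega) hjm
    have h3 : 0 ≤ lambda1 (quotLat Ls J) := lambda1_nonneg _
    simp only [hcap]
    nlinarith
  have hcapnn : ∀ j, J ≤ j → j ≤ m → 0 ≤ cap j := fun j h1 h2 => le_trans hd0.le (hcapd j h1 h2)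
  have htermnn : ∀ j ∈ Finset.Icc J m, (0:ℝ) ≤ (min (D j) (cap j)) ^ 2 := fun j _ => sq_nonneg _
  have hterm : ∀ j ∈ Finset.Icc J m, min (D j) (cap j) = D j ∧ D j < (1 / 10) * d := by
    intro j hj
    have hj' := Finset.mem_Icc.1 hj
    have h1 : (min (D j) (cap j)) ^ 2 ≤ ∑ i ∈ Finset.Icc J m, (min (D i) (cap i)) ^ 2 :=
      Finset.single_le_sum htermnn hj
    have h2 : (min (D j) (cap j)) ^ 2 < ((1 / 10) * d) ^ 2 := by
      calc (min (D j) (cap j)) ^ 2 ≤ _ := h1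
        _ < (1 / 100) * d ^ 2 := hS
        _ = ((1 / 10) * d) ^ 2 := by ring
    have hmin0 : 0 ≤ min (D j) (cap j) := le_min (hDnn j) (hcapnn j hj'.1 hj'.2)
    have h3 : min (D j) (cap j) < (1 / 10) * d := by nlinarith
    have h4 : D j < (1 / 10) * d := by
      rcases le_or_gt (D j) (cap j) with h | h
      · rwa [min_eq_left h] at h3
      · exfalso
        rw [min_eq_right h.le] at h3
        have := hcapd j hj'.1 hj'.2
        linarith
    exact ⟨min_eq_left (by linarith [hcapd j hj'.1 hj'.2]), h4⟩
  have hPsum : ∑ j ∈ Finset.Icc J m, (D j) ^ 2 < (1 / 100) * d ^ 2 := by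
    have : ∑ j ∈ Finset.Icc J m, (D j) ^ 2
        = ∑ j ∈ Finset.Icc J m, (min (D j) (cap j)) ^ 2 :=
      Finset.sum_congr rfl fun j hj => by rw [(hterm j hj).1]
    rw [this]; exact hS
  -- choose good lattice approximations at every scale
  set N := (Finset.Icc J m).card with hN
  have hNpos : 0 < N := by
    rw [hN, Nat.card_Icc]; omega
  set β := (1 / 100) * d ^ 2 - ∑ j ∈ Finset.Icc J m, (D j) ^ 2 with hβ
  have hβ0 : 0 < β := by rw [hβ]; linarith
  have himg_ne : ∀ j, (filtEmbed Ls m α j '' (L : Set (EuclideanSpace ℝ (Fin n)))).Nonempty :=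
    fun j => ⟨filtEmbed Ls m α j 0, 0, Submodule.zero_mem L, rfl⟩
  have hch : ∀ j, ∃ w, w ∈ L ∧ (j ∈ Finset.Icc J m →
      ‖filtEmbed Ls m α j (v - w)‖ ^ 2 < (D j) ^ 2 + β / N) := by
    intro j
    by_cases hj : j ∈ Finset.Icc J m
    · set r := Real.sqrt ((D j) ^ 2 + β / N) with hr
      have hrN : (0:ℝ) < β / N := by positivity
      have hr2 : r ^ 2 = (D j) ^ 2 + β / N := Real.sq_sqrt (by positivity)
      have hr0 : 0 ≤ r := Real.sqrt_nonneg _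
      have hDr : D j < r := by nlinarith [hDnn j]
      obtain ⟨p, hp, hdp⟩ := (Metric.infDist_lt_iff (himg_ne j)).1 hDr
      obtain ⟨wj, hwjL, rfl⟩ := hp
      refine ⟨wj, hwjL, fun _ => ?_⟩
      rw [filtEmbed_sub, ← dist_eq_norm]
      nlinarith [dist_nonneg (x := filtEmbed Ls m α j v) (y := filtEmbed Ls m α j wj)]
    · exact ⟨0, Submodule.zero_mem L, fun h => absurd h hj⟩
  choose w hwL hwB using hch
  set η := fun j => ‖filtEmbed Ls m α j (v - w j)‖ with hη
  have hηnn : ∀ j, 0 ≤ η j := fun j => norm_nonneg _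
  have hsumη : ∑ j ∈ Finset.Icc J m, (η j) ^ 2 < (1 / 100) * d ^ 2 := by
    have hlt : ∑ j ∈ Finset.Icc J m, (η j) ^ 2
        < ∑ j ∈ Finset.Icc J m, ((D j) ^ 2 + β / N) := by
      apply Finset.sum_lt_sum_of_nonempty
      · exact ⟨J, Finset.mem_Icc.2 ⟨le_rfl, hJm⟩⟩
      · intro j hj
        exact hwB j hj
    have hNne : (N : ℝ) ≠ 0 := Nat.cast_ne_zero.2 (by omega)
    have heq : ∑ j ∈ Finset.Icc J m, ((D j) ^ 2 + β / N)
        = (∑ j ∈ Finset.Icc J m, (D j) ^ 2) + β := by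
      rw [Finset.sum_add_distrib, Finset.sum_const, ← hN, nsmul_eq_mul, mul_comm,
        div_mul_cancel₀ _ hNne]
    rw [heq] at hlt
    rw [hβ] at hlt
    linarith
  have hηle : ∀ j ∈ Finset.Icc J m, η j ≤ (1 / 10) * d := by
    intro j hj
    have h1 : (η j) ^ 2 < (D j) ^ 2 + β / N := hwB j hj
    have h2 : (D j) ^ 2 ≤ ∑ i ∈ Finset.Icc J m, (D i) ^ 2 :=
      Finset.single_le_sum (f := fun i => (D i) ^ 2) (fun i _ => sq_nonneg _) hj
    have h3 : β / N ≤ β := by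
      rw [div_le_iff₀ (by exact_mod_cast hNpos)]
      nlinarith [hβ0, (by exact_mod_cast hNpos : (0:ℝ) < (N:ℝ)), (by exact_mod_cast hNpos : (1:ℝ) ≤ (N:ℝ))]
    have h4 : (η j) ^ 2 ≤ ((1/10) * d) ^ 2 := by
      rw [hβ] at h3
      nlinarith
    nlinarith [hηnn j, hd0]
  -- structural membership of the approximators
  have hwmem : ∀ j, J ≤ j → j ≤ m → w j ∈ Ls (min (max j (J + 2) - 1) m) := by
    intro j h1 h2
    exact wj_mem_Ls hc htop hγ hq hqγ hg hα hd0 hJ1 h1 h2 hdJ le_rfl (hwL j)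
      (hηle j (Finset.mem_Icc.2 ⟨h1, h2⟩))
  -- blocks of v at high scales are small
  have hEvj : ∀ j, J + 2 ≤ j → j ≤ m → ‖auxP Ls j v‖ ≤ η j := by
    intro j h1 h2
    have hmm : min (max j (J + 2) - 1) m = j - 1 := by omega
    have hwj : w j ∈ Ls (j - 1) := by
      have := hwmem j (by omega) h2
      rwa [hmm] at this
    have hEwj : filtEmbed Ls m α j (w j) = 0 :=
      filtEmbed_zero_of_mem_low hmono (by omega) (mem_auxV_of_mem_Ls hwj)
    have hEv : filtEmbed Ls m α j (v - w j) = filtEmbed Ls m α j v := by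
      rw [filtEmbed_sub, hEwj, sub_zero]
    have hb := block_le_norm_filtEmbed hmono hα0
      (Finset.mem_Icc.2 ⟨le_rfl, h2⟩) (x := v - w j) (i := j)
    rw [Nat.sub_self, pow_zero, one_mul, hEv] at hb
    have hPsub : auxP Ls j (v - w j) = auxP Ls j v - auxP Ls j (w j) := auxP_sub j v (w j)
    have hPwj : auxP Ls j (w j) = 0 :=
      auxP_zero_of_mem_low hmono (by omega) (by omega) (mem_auxV_of_mem_Ls hwj)
    rw [hPsub, hPwj, sub_zero] at hb
    have hηeq : η j = ‖filtEmbed Ls m α j v‖ := by simp only [hη]; rw [hEv]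
    rw [hηeq]
    exact hb
  -- low-scale covering
  have hwJmem : w J ∈ Ls (min (J + 1) m) := by
    have := hwmem J le_rfl hJm
    have hmm : min (max J (J + 2) - 1) m = min (J + 1) m := by omega
    rwa [hmm] at this
  have hxlow : auxQ Ls (J - 1) (v - w J) ∈ auxV Ls (J - 1) := auxQ_mem _ _
  obtain ⟨c, hcLs, hcb⟩ := covering_bound hc hcov hq0 (J - 1) (by omega) _ hxlow
    (d ^ 2 / 10) (by positivity)
  have hR : (∑ j ∈ Finset.Ioc 0 (J - 1), (q * lambda1 (quotLat Ls j) / 2) ^ 2) ≤ d ^ 2 / 3 := by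
    rcases Nat.eq_or_lt_of_le hJ1 with h1 | h1
    · rw [← h1]
      simp
      positivity
    · have hJ2 : 1 ≤ J - 1 := by omega
      have h2 := sum_lam_sq_le hγ hq0.le hg (J - 1) hJ2 (by omega)
      have h3 := hJmin (J - 1) hJ2 (by omega)
      have h4 : 0 ≤ q * lambda1 (quotLat Ls (J - 1)) :=
        mul_nonneg hq0.le (lambda1_nonneg _)
      nlinarith
  -- assemble the contradiction
  set u := w J + c with hu
  have huL : u ∈ L := Submodule.add_mem L (hwL J) (Ls_le_L hc (by omega) hcLs)
  set z := v - u with hz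
  have hzsplit : z = (v - w J) - c := by rw [hz, hu]; abel
  have hdecomp : ‖z‖ ^ 2 = ‖auxQ Ls (J - 1) z‖ ^ 2
      + ∑ i ∈ Finset.Ioc (J - 1) m, ‖auxP Ls i z‖ ^ 2 :=
    norm_sq_decomp hbot htop hmono (by omega) z
  have hQz : auxQ Ls (J - 1) z = auxQ Ls (J - 1) (v - w J) - c := by
    rw [hzsplit, auxQ_sub, auxQ_eq_self (mem_auxV_of_mem_Ls hcLs)]
  have hPz : ∀ i, J ≤ i → i ≤ m → auxP Ls i z = auxP Ls i (v - w J) := by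
    intro i h1 h2
    rw [hzsplit, auxP_sub]
    rw [auxP_zero_of_mem_low hmono (k := J - 1) (by omega) (by omega)
      (mem_auxV_of_mem_Ls hcLs), sub_zero]
  -- per-block bounds
  have hbJ : ‖auxP Ls J (v - w J)‖ ≤ η J := by
    have hb := block_le_norm_filtEmbed hmono hα0
      (Finset.mem_Icc.2 ⟨le_rfl, hJm⟩) (x := v - w J) (i := J)
    rwa [Nat.sub_self, pow_zero, one_mul] at hb
  have hbJ1 : J + 1 ≤ m → ‖auxP Ls (J + 1) (v - w J)‖ ≤ 2 * η J := by
    intro hJ1m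
    have hb := block_le_norm_filtEmbed (j := J) (i := J + 1) (x := v - w J) hmono hα0
      (Finset.mem_Icc.2 ⟨Nat.le_succ J, hJ1m⟩)
    have h1 : J + 1 - J = 1 := by omega
    rw [h1, pow_one] at hb
    have hnn : 0 ≤ ‖auxP Ls (J + 1) (v - w J)‖ := norm_nonneg _
    nlinarith
  have hbHigh : ∀ i, J + 2 ≤ i → i ≤ m → ‖auxP Ls i (v - w J)‖ ≤ η i := by
    intro i h1 h2
    have hPwJ : auxP Ls i (w J) = 0 := by
      apply auxP_zero_of_mem_low hmono (k := min (J + 1) m) (by omega) (by omega)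
        (mem_auxV_of_mem_Ls hwJmem)
    rw [auxP_sub, hPwJ, sub_zero]
    exact hEvj i h1 h2
  -- numeric bound on the block sum
  have hηJ : η J ≤ (1 / 10) * d := hηle J (Finset.mem_Icc.2 ⟨le_rfl, hJm⟩)
  have hblocksum : ∑ i ∈ Finset.Ioc (J - 1) m, ‖auxP Ls i z‖ ^ 2 ≤ (6 / 100) * d ^ 2 := by
    rcases Nat.eq_or_lt_of_le hJm with hJm' | hJm'
    · -- J = m
      have hset : Finset.Ioc (J - 1) m = {J} := by
        ext i; simp only [Finset.mem_Ioc, Finset.mem_singleton]; omega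
      rw [hset, Finset.sum_singleton, hPz J le_rfl hJm]
      nlinarith [hbJ, hηJ, norm_nonneg (auxP Ls J (v - w J)), hηnn J, hd0]
    · -- J < m
      have hset : Finset.Ioc (J - 1) m
          = insert J (insert (J + 1) (Finset.Ioc (J + 1) m)) := by
        ext i
        simp only [Finset.mem_Ioc, Finset.mem_insert]
        omega
      have hnotmem1 : J ∉ insert (J + 1) (Finset.Ioc (J + 1) m) := by
        simp only [Finset.mem_insert, Finset.mem_Ioc]
        omega
      have hnotmem2 : J + 1 ∉ Finset.Ioc (J + 1) m := by
        simp only [Finset.mem_Ioc]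
        omega
      rw [hset, Finset.sum_insert hnotmem1, Finset.sum_insert hnotmem2]
      have ht1 : ‖auxP Ls J z‖ ^ 2 ≤ (1 / 100) * d ^ 2 := by
        rw [hPz J le_rfl hJm]
        nlinarith [hbJ, hηJ, norm_nonneg (auxP Ls J (v - w J)), hηnn J, hd0]
      have ht2 : ‖auxP Ls (J + 1) z‖ ^ 2 ≤ (4 / 100) * d ^ 2 := by
        rw [hPz (J + 1) (by omega) (by omega)]
        have := hbJ1 (by omega)
        nlinarith [norm_nonneg (auxP Ls (J + 1) (v - w J)), hηnn J]
      have ht3 : ∑ i ∈ Finset.Ioc (J + 1) m, ‖auxP Ls i z‖ ^ 2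
          ≤ ∑ i ∈ Finset.Icc J m, (η i) ^ 2 := by
        have hsub : Finset.Ioc (J + 1) m ⊆ Finset.Icc J m := by
          intro i hi
          simp only [Finset.mem_Ioc] at hi
          simp only [Finset.mem_Icc]
          omega
        calc ∑ i ∈ Finset.Ioc (J + 1) m, ‖auxP Ls i z‖ ^ 2
            ≤ ∑ i ∈ Finset.Ioc (J + 1) m, (η i) ^ 2 := by
              apply Finset.sum_le_sum
              intro i hi
              simp only [Finset.mem_Ioc] at hi
              rw [hPz i (by omega) hi.2]
              have := hbHigh i (by omega) hi.2
              nlinarith [norm_nonneg (auxP Ls i (v - w J)), hηnn i]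
          _ ≤ ∑ i ∈ Finset.Icc J m, (η i) ^ 2 :=
              Finset.sum_le_sum_of_subset_of_nonneg hsub (fun i _ _ => sq_nonneg _)
      nlinarith
  -- final contradiction
  have hfar : d ≤ ‖z‖ := by
    have h1 : Metric.infDist v (L : Set (EuclideanSpace ℝ (Fin n))) ≤ dist v u :=
      Metric.infDist_le_dist_of_mem huL
    rw [hv] at h1
    calc d ≤ dist v u := h1
      _ = ‖v - u‖ := dist_eq_norm v u
      _ = ‖z‖ := rfl
  have hnear : ‖z‖ ^ 2 ≤ (d ^ 2 / 3 + d ^ 2 / 10) + (6 / 100) * d ^ 2 := by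
    rw [hdecomp, hQz]
    have h1 : ‖auxQ Ls (J - 1) (v - w J) - c‖ ^ 2 ≤ d ^ 2 / 3 + d ^ 2 / 10 := by
      calc ‖auxQ Ls (J - 1) (v - w J) - c‖ ^ 2
          ≤ (∑ j ∈ Finset.Ioc 0 (J - 1), (q * lambda1 (quotLat Ls j) / 2) ^ 2) + d ^ 2 / 10 :=
            hcb
        _ ≤ d ^ 2 / 3 + d ^ 2 / 10 := by linarith
    linarith [hblocksum]
  nlinarith [hfar, hnear, hd0]

end AuxCore
set_option maxHeartbeats 1000000 in
/-- Contraction of the compressed-projection embedding: there is an absolute constant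
`c_E > 0` such that for any `(q, γ)`-filtration with `γ ≥ 2`, `q ≤ γ²/32`, and
`1/2 ≤ α < 1`, `Σ_{j=1}^m min(dist(E_{j,α}(x − y), E_{j,α}(L)), q²·λ₁(E_{j,α}(L)))²
≥ c_E·dist(x − y, L)²`. -/
theorem filtEmbed_contraction :
    ∃ c_E : ℝ, 0 < c_E ∧
      ∀ (n : ℕ) (L : Submodule ℤ (EuclideanSpace ℝ (Fin n))) [DiscreteTopology L],
        IsZLattice ℝ L →
          ∀ (m : ℕ) (Ls : ℕ → Submodule ℤ (EuclideanSpace ℝ (Fin n))) (q γ : ℝ),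
            1 ≤ q → 2 ≤ γ → q ≤ γ ^ 2 / 32 →
              IsQGFiltration L m Ls q γ →
                ∀ (α : ℝ), 1 / 2 ≤ α → α < 1 →
                  ∀ (x y : EuclideanSpace ℝ (Fin n)),
                    ∑ j ∈ Finset.Icc 1 m,
                        min (Metric.infDist (filtEmbed Ls m α j (x - y))
                              (filtEmbed Ls m α j '' (L : Set (EuclideanSpace ℝ (Fin n)))))
                          (q ^ 2 * lambda1 (filtEmbed Ls m α j '' (L : Set (EuclideanSpace ℝ (Fin n))))) ^ 2
                      ≥ c_E * Metric.infDist (x - y) (L : Set (EuclideanSpace ℝ (Fin n))) ^ 2 := by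
  classical
  refine ⟨1 / 100, by norm_num, ?_⟩
  intro n L _ hZ m Ls q γ hq hγ hqγ hfil α hα hα1 x y
  obtain ⟨hc, hcov, hg⟩ := hfil
  have htop : auxV Ls m = ⊤ := auxV_top hc hZ.span_top
  have htermnn : ∀ j ∈ Finset.Icc 1 m,
      (0:ℝ) ≤ min (Metric.infDist (filtEmbed Ls m α j (x - y))
        (filtEmbed Ls m α j '' (L : Set (EuclideanSpace ℝ (Fin n)))))
        (q ^ 2 * lambda1 (filtEmbed Ls m α j '' (L : Set (EuclideanSpace ℝ (Fin n))))) ^ 2 :=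
    fun j _ => sq_nonneg _
  set d := Metric.infDist (x - y) (L : Set (EuclideanSpace ℝ (Fin n))) with hd
  rcases le_or_gt d 0 with hd0 | hd0
  · have hdz : d = 0 := le_antisymm hd0 Metric.infDist_nonneg
    have hrhs : (1 / 100 : ℝ) * d ^ 2 = 0 := by rw [hdz]; ring
    rw [ge_iff_le, hrhs]
    exact Finset.sum_nonneg htermnn
  · have hq0 : (0:ℝ) < q := by linarith
    have hm1 : 1 ≤ m := by
      by_contra hm
      have hm0 : m = 0 := by omega
      have h1 : auxV Ls 0 = ⊤ := by rw [← hm0]; exact htop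
      rw [auxV_zero hc.1] at h1
      have hxy : (x - y) ∈ (⊥ : Submodule ℝ (EuclideanSpace ℝ (Fin n))) := by
        rw [h1]; trivial
      rw [Submodule.mem_bot] at hxy
      have : d = 0 := by
        rw [hd, hxy]
        exact Metric.infDist_zero_of_mem (Submodule.zero_mem L)
      linarith
    -- reduce to a vector realizing the distance
    obtain ⟨w0, hw0L, hw0⟩ := exists_closest L (x - y)
    set v := (x - y) - w0 with hv
    have hsubL : ∀ a ∈ (L : Set (EuclideanSpace ℝ (Fin n))), ∀ b ∈ (L : Set (EuclideanSpace ℝ (Fin n))),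
        a - b ∈ (L : Set (EuclideanSpace ℝ (Fin n))) := fun a ha b hb => Submodule.sub_mem L ha hb
    have hdv : Metric.infDist v (L : Set (EuclideanSpace ℝ (Fin n))) = d := by
      rw [hv, infDist_sub_of_mem hsubL hw0L]
    have hvnorm : ‖v‖ = d := by
      rw [hv, ← dist_eq_norm]
      exact hw0
    have hd0' : 0 < ‖v‖ := by rw [hvnorm]; exact hd0
    have hvv : Metric.infDist v (L : Set (EuclideanSpace ℝ (Fin n))) = ‖v‖ := by
      rw [hdv, hvnorm]
    -- existence of the scale J
    have hdqm : ‖v‖ ≤ q * lambda1 (quotLat Ls m) := by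
      have hvtop : v ∈ auxV Ls m := by rw [htop]; trivial
      have hball : ∀ β > (0:ℝ), ‖v‖ ^ 2 ≤ (q * lambda1 (quotLat Ls m)) ^ 2 / 3 + β := by
        intro β hβ
        obtain ⟨u, huLs, hub⟩ := covering_bound hc hcov hq0 m le_rfl v hvtop β hβ
        have huL : u ∈ L := Ls_le_L hc le_rfl huLs
        have h1 : ‖v‖ ≤ ‖v - u‖ := by
          rw [← hvv]
          calc Metric.infDist v (L : Set (EuclideanSpace ℝ (Fin n))) ≤ dist v u :=
                Metric.infDist_le_dist_of_mem huL
            _ = ‖v - u‖ := dist_eq_norm _ _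
        have h2 := sum_lam_sq_le hγ hq0.le hg m hm1 le_rfl
        nlinarith [norm_nonneg (v - u)]
      have h3 : ‖v‖ ^ 2 ≤ (q * lambda1 (quotLat Ls m)) ^ 2 / 3 :=
        le_of_forall_pos_le_add hball
      have h4 : 0 ≤ q * lambda1 (quotLat Ls m) :=
        mul_nonneg hq0.le (lambda1_nonneg _)
      nlinarith [hd0', h3, h4, sq_nonneg (‖v‖ + q * lambda1 (quotLat Ls m))]
    have hJex : ∃ jj, 1 ≤ jj ∧ jj ≤ m ∧ ‖v‖ ≤ q * lambda1 (quotLat Ls jj) :=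
      ⟨m, hm1, le_rfl, hdqm⟩
    set J := Nat.find hJex with hJ
    have hJspec := Nat.find_spec hJex
    have hJ1 : 1 ≤ J := hJspec.1
    have hJm : J ≤ m := hJspec.2.1
    have hdJ : ‖v‖ ≤ q * lambda1 (quotLat Ls J) := hJspec.2.2
    have hJmin : ∀ jj, 1 ≤ jj → jj < J → q * lambda1 (quotLat Ls jj) < ‖v‖ := by
      intro jj h1 h2
      have hmin := Nat.find_min hJex h2
      by_contra hcon
      push_neg at hcon
      exact hmin ⟨h1, by omega, hcon⟩
    have hcore := main_core hc htop hγ hq hqγ hcov hg hα hvv hd0' hJ1 hJm hdJ hJmin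
    -- translate the distances back to `x - y`
    have hDeq : ∀ j, Metric.infDist (filtEmbed Ls m α j (x - y))
        (filtEmbed Ls m α j '' (L : Set (EuclideanSpace ℝ (Fin n))))
        = Metric.infDist (filtEmbed Ls m α j v)
          (filtEmbed Ls m α j '' (L : Set (EuclideanSpace ℝ (Fin n)))) := by
      intro j
      have hsubE : ∀ a ∈ filtEmbed Ls m α j '' (L : Set (EuclideanSpace ℝ (Fin n))),
          ∀ b ∈ filtEmbed Ls m α j '' (L : Set (EuclideanSpace ℝ (Fin n))),
            a - b ∈ filtEmbed Ls m α j '' (L : Set (EuclideanSpace ℝ (Fin n))) := by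
        rintro _ ⟨a, ha, rfl⟩ _ ⟨b, hb, rfl⟩
        exact ⟨a - b, Submodule.sub_mem L ha hb, filtEmbed_sub α j a b⟩
      have hEw0 : filtEmbed Ls m α j w0 ∈ filtEmbed Ls m α j ''
          (L : Set (EuclideanSpace ℝ (Fin n))) := ⟨w0, hw0L, rfl⟩
      have hveq : filtEmbed Ls m α j v = filtEmbed Ls m α j (x - y) - filtEmbed Ls m α j w0 := by
        rw [hv, filtEmbed_sub]
      rw [hveq, infDist_sub_of_mem hsubE hEw0]
    have hsubset : Finset.Icc J m ⊆ Finset.Icc 1 m := by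
      intro i hi
      simp only [Finset.mem_Icc] at hi ⊢
      omega
    rw [ge_iff_le]
    calc (1 / 100 : ℝ) * d ^ 2 = (1 / 100 : ℝ) * ‖v‖ ^ 2 := by rw [hvnorm]
      _ ≤ ∑ j ∈ Finset.Icc J m,
            (min (Metric.infDist (filtEmbed Ls m α j v)
              (filtEmbed Ls m α j '' (L : Set (EuclideanSpace ℝ (Fin n)))))
            (q ^ 2 * lambda1 (filtEmbed Ls m α j '' (L : Set (EuclideanSpace ℝ (Fin n)))))) ^ 2 :=
          hcore
      _ ≤ ∑ j ∈ Finset.Icc 1 m,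
            (min (Metric.infDist (filtEmbed Ls m α j v)
              (filtEmbed Ls m α j '' (L : Set (EuclideanSpace ℝ (Fin n)))))
            (q ^ 2 * lambda1 (filtEmbed Ls m α j '' (L : Set (EuclideanSpace ℝ (Fin n)))))) ^ 2 :=
          Finset.sum_le_sum_of_subset_of_nonneg hsubset (fun i _ _ => sq_nonneg _)
      _ = ∑ j ∈ Finset.Icc 1 m,
            (min (Metric.infDist (filtEmbed Ls m α j (x - y))
              (filtEmbed Ls m α j '' (L : Set (EuclideanSpace ℝ (Fin n)))))
            (q ^ 2 * lambda1 (filtEmbed Ls m α j '' (L : Set (EuclideanSpace ℝ (Fin n)))))) ^ 2 := by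
          refine Finset.sum_congr rfl fun j _ => ?_
          rw [hDeq j]
end
end
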